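/- arXiv:2502.03216 — 5 statements merged into one kernel-verified Lean document; each statement's English description precedes it below -/
import Mathlib

section
/- Let τ, λ ∈ ℂ with λ ≠ 0, write λ = w² for w ∈ ℂ \ {0}. The problem u'' = λu on (0,1) with boundary conditions u'(0) + τ u(1) = λ u(0) and −u'(1) − τ u(0) = λ u(1) has a nonzero solution u of the form u(x) = α e^{wx} + β e^{−wx} if and only if 2(−τ² − w² − w⁴) sinh(w) − 4 w³ cosh(w) = 0. -/
/-- The eigenvalue problem `u'' = λu` on `(0,1)` (with `λ = w² ≠ 0`) subject to
`u'(0) + τu(1) = λu(0)` and `-u'(1) - τu(0) = λu(1)` has a nonzero solution of the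
form `u(x) = αe^{wx} + βe^{-wx}` iff `2(-τ² - w² - w⁴)sinh(w) - 4w³cosh(w) = 0`. -/
theorem stmt4 (τ w : ℂ) (hw : w ≠ 0) :
    (∃ α β : ℂ, (α ≠ 0 ∨ β ≠ 0) ∧
      (let u : ℂ → ℂ := fun x => α * Complex.exp (w * x) + β * Complex.exp (-w * x)
       let u' : ℂ → ℂ := fun x =>
         α * w * Complex.exp (w * x) - β * w * Complex.exp (-w * x)
       u' 0 + τ * u 1 = w ^ 2 * u 0 ∧ -u' 1 - τ * u 0 = w ^ 2 * u 1)) ↔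
    2 * (-τ ^ 2 - w ^ 2 - w ^ 4) * Complex.sinh w - 4 * w ^ 3 * Complex.cosh w = 0 := by
  have hEF : Complex.exp w * Complex.exp (-w) = 1 := by
    rw [← Complex.exp_add]; simp
  have hs : 2 * Complex.sinh w = Complex.exp w - Complex.exp (-w) := Complex.two_sinh w
  have hc : 2 * Complex.cosh w = Complex.exp w + Complex.exp (-w) := Complex.two_cosh w
  constructor
  · rintro ⟨α, β, hαβ, h1, h2⟩
    simp only [mul_zero, mul_one, Complex.exp_zero, neg_zero] at h1 h2
    have hzero : (-τ ^ 2 - w ^ 2 - w ^ 4) * (Complex.exp w - Complex.exp (-w))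
        - 2 * w ^ 3 * (Complex.exp w + Complex.exp (-w)) = 0 := by
      rcases hαβ with hα | hβ
      · have key : ((-τ ^ 2 - w ^ 2 - w ^ 4) * (Complex.exp w - Complex.exp (-w))
            - 2 * w ^ 3 * (Complex.exp w + Complex.exp (-w))) * α = 0 := by
          linear_combination (w * Complex.exp (-w) - τ - w ^ 2 * Complex.exp (-w)) * h1
            - (-w + τ * Complex.exp (-w) - w ^ 2) * h2 - 2 * τ * w * α * hEF
        exact (mul_eq_zero.1 key).resolve_right hα
      · have key : ((-τ ^ 2 - w ^ 2 - w ^ 4) * (Complex.exp w - Complex.exp (-w))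
            - 2 * w ^ 3 * (Complex.exp w + Complex.exp (-w))) * β = 0 := by
          linear_combination (w + τ * Complex.exp w - w ^ 2) * h2
            - (-w * Complex.exp w - τ - w ^ 2 * Complex.exp w) * h1 - 2 * τ * w * β * hEF
        exact (mul_eq_zero.1 key).resolve_right hβ
    linear_combination hzero + (-τ ^ 2 - w ^ 2 - w ^ 4) * hs - 2 * w ^ 3 * hc
  · intro hdet0
    have hdet : (-τ ^ 2 - w ^ 2 - w ^ 4) * (Complex.exp w - Complex.exp (-w))
        - 2 * w ^ 3 * (Complex.exp w + Complex.exp (-w)) = 0 := by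
      linear_combination hdet0 - (-τ ^ 2 - w ^ 2 - w ^ 4) * hs + 2 * w ^ 3 * hc
    by_cases hab : (w + τ * Complex.exp w - w ^ 2 = 0) ∧ (-w + τ * Complex.exp (-w) - w ^ 2 = 0)
    · by_cases hcd : (-w * Complex.exp w - τ - w ^ 2 * Complex.exp w = 0) ∧
          (w * Complex.exp (-w) - τ - w ^ 2 * Complex.exp (-w) = 0)
      · refine ⟨1, 0, Or.inl one_ne_zero, ?_, ?_⟩ <;>
          simp only [mul_zero, mul_one, Complex.exp_zero, neg_zero]
        · linear_combination hab.1
        · linear_combination hcd.1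
      · rw [not_and_or] at hcd
        refine ⟨w * Complex.exp (-w) - τ - w ^ 2 * Complex.exp (-w),
          -(-w * Complex.exp w - τ - w ^ 2 * Complex.exp w), ?_, ?_, ?_⟩
        · rcases hcd with h | h
          · exact Or.inr (neg_ne_zero.mpr h)
          · exact Or.inl h
        · simp only [mul_zero, mul_one, Complex.exp_zero, neg_zero]
          linear_combination (w * Complex.exp (-w) - τ - w ^ 2 * Complex.exp (-w)) * hab.1
            - (-w * Complex.exp w - τ - w ^ 2 * Complex.exp w) * hab.2
        · simp only [mul_zero, mul_one, Complex.exp_zero, neg_zero]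
          ring
    · rw [not_and_or] at hab
      refine ⟨-w + τ * Complex.exp (-w) - w ^ 2, -(w + τ * Complex.exp w - w ^ 2), ?_, ?_, ?_⟩
      · rcases hab with h | h
        · exact Or.inr (neg_ne_zero.mpr h)
        · exact Or.inl h
      · simp only [mul_zero, mul_one, Complex.exp_zero, neg_zero]
        ring
      · simp only [mul_zero, mul_one, Complex.exp_zero, neg_zero]
        linear_combination -hdet - 2 * τ * w * hEF
end

section
/- Let J = (0, μ₂) where μ₂ is the smallest positive zero of 2μ cot μ + 1 − μ² on (0, π), and let f(μ) = μ√(2μ cot μ + 1 − μ²). Then the maximizer μ_s of f on [0, μ₂] is the unique solution in J of the equation 1 = 2μ² − 3μ cot μ + μ² csc²μ, and at any critical point of f in J the derivative of f² satisfies (f²)'(μ) = −2μ(−1 + 2μ² − 3μ cot μ + μ² csc²μ). -/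
open Real Set
set_option maxHeartbeats 1000000
lemma ppos {x : ℝ} (hx : 0 < x) (hxπ : x < π) :
    0 < 4*x*(sin x)^3 - 3*cos x*(sin x)^2 + 5*x*sin x - 2*x^2*cos x := by
  have hs : 0 < sin x := sin_pos_of_pos_of_lt_pi hx hxπ
  have hpi : π < 3.15 := pi_lt_d2
  rcases le_or_gt x 1 with h1 | h1
  · have hsl : x - x^3/4 < sin x := by nlinarith [sin_gt_sub_cube hx, pow_pos hx 3]
    have hsu : sin x < x := sin_lt hx
    have hcb := abs_le.mp (Real.cos_bound (x := x) (by rw [abs_of_pos hx]; exact h1))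
    have hcu : cos x ≤ 1 - x^2/2 + x^4*(5/96) := by
      rw [abs_of_pos hx] at hcb; nlinarith [hcb.2]
    have hc0 : 0 < cos x := by
      apply cos_pos_of_mem_Ioo; constructor <;> nlinarith [pi_gt_three]
    have hq : (0:ℝ) < x - x^3/4 := by nlinarith
    have hs2 : (sin x)^2 ≤ x^2 := by nlinarith
    have A : cos x * (3*(sin x)^2 + 2*x^2) ≤ cos x * (5*x^2) := by
      nlinarith [mul_le_mul_of_nonneg_left hs2 hc0.le]
    have B : cos x * (5*x^2) ≤ (1 - x^2/2 + x^4*(5/96)) * (5*x^2) :=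
      mul_le_mul_of_nonneg_right hcu (by positivity)
    have C : 4*x*(x - x^3/4)^3 ≤ 4*x*(sin x)^3 := by
      have := pow_le_pow_left₀ hq.le hsl.le 3
      nlinarith
    have D : 5*x*(x-x^3/4) ≤ 5*x*sin x := by nlinarith
    have key : (0:ℝ) < 4*x*(x - x^3/4)^3 + 5*x*(x-x^3/4) - (1 - x^2/2 + x^4*(5/96)) * (5*x^2) := by
      have h34 : (3:ℝ)/4 ≤ 1 - x^2/4 := by nlinarith
      have h27 : (27:ℝ)/64 ≤ (1 - x^2/4)^3 := by
        have := pow_le_pow_left₀ (by norm_num : (0:ℝ) ≤ 3/4) h34 3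
        norm_num at this ⊢; linarith
      have hx4 : (0:ℝ) < x^4 := by positivity
      nlinarith [mul_le_mul_of_nonneg_left h27 (by positivity : (0:ℝ) ≤ 4*x^4)]
    nlinarith
  · rcases le_or_gt x (π/2) with h2 | h2
    · have hs1 : sin 1 ≤ sin x := by
        apply strictMonoOn_sin.monotoneOn ⟨by norm_num [pi_gt_three] <;> nlinarith [pi_gt_three], by nlinarith [pi_gt_three]⟩ ⟨by nlinarith, h2⟩ h1.le
      have hs1' : (3:ℝ)/4 < sin 1 := by nlinarith [sin_gt_sub_cube one_pos]
      have hc1 : cos x ≤ cos 1 := cos_le_cos_of_nonneg_of_le_pi (by norm_num) hxπ.le h1.le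
      have hc0 : 0 ≤ cos x := cos_nonneg_of_mem_Icc ⟨by nlinarith, h2⟩
      have hsu : sin x ≤ 1 := sin_le_one x
      nlinarith [cos_one_le, mul_pos hx hs, pow_pos hs 3, sq_nonneg (sin x),
        mul_le_mul_of_nonneg_left (by nlinarith : (sin x)^2 ≤ 1) hc0,
        mul_le_mul_of_nonneg_left (by nlinarith : x^2 ≤ (3.15/2)^2) hc0]
    · have hc : cos x ≤ 0 := cos_nonpos_of_pi_div_two_le_of_le h2.le (by nlinarith)
      nlinarith [mul_pos hx hs, pow_pos hs 3, mul_pos (mul_pos hx hs) hs, sq_nonneg x]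

lemma aux_hq {x : ℝ} (hs : Real.sin x ≠ 0) :
    HasDerivAt (fun t => Real.cos t / Real.sin t) (-(Real.sin x ^ 2)⁻¹) x := by
  refine ((Real.hasDerivAt_cos x).div (Real.hasDerivAt_sin x) hs).congr_deriv ?_
  have hpy : sin x ^ 2 + cos x ^ 2 = 1 := sin_sq_add_cos_sq x
  field_simp
  nlinarith [hpy]

lemma hasDerivAt_hfun {x : ℝ} (hs : sin x ≠ 0) :
    HasDerivAt (fun t => -1 + 2*t^2 - 3*t*(cos t/sin t) + t^2*((sin t)⁻¹)^2)
      ((4*x*(sin x)^3 - 3*cos x*(sin x)^2 + 5*x*sin x - 2*x^2*cos x)/(sin x)^3) x := by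
  have hq := aux_hq hs
  have hi : HasDerivAt (fun t => (sin t)⁻¹) (-(cos x) / (sin x)^2) x := by
    exact ((Real.hasDerivAt_sin x).inv hs).congr_deriv (by ring)
  have hr := hi.pow 2
  have h2 : HasDerivAt (fun t : ℝ => t^2) (2*x) x := by simpa using hasDerivAt_pow 2 x
  have hA : HasDerivAt (fun t : ℝ => t) 1 x := hasDerivAt_id x
  have main := (((h2.const_mul 2).const_add (-1)).sub ((hA.mul hq).const_mul 3)).add (h2.mul hr)
  refine (main.congr_deriv ?_).congr_of_eventuallyEq (Filter.Eventually.of_forall fun t => ?_)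
  · simp only [Pi.add_apply, Pi.sub_apply, Pi.mul_apply, Pi.pow_apply]
    push_cast
    field_simp
    ring
  · simp only [Pi.add_apply, Pi.sub_apply, Pi.mul_apply, Pi.pow_apply]; ring

lemma hasDerivAt_Ffun {x : ℝ} (hs : sin x ≠ 0) :
    HasDerivAt (fun t => t^2 * (2*t*(cos t/sin t) + 1 - t^2))
      (-2*x*(-1 + 2*x^2 - 3*x*(cos x/sin x) + x^2*((sin x)⁻¹)^2)) x := by
  have hq := aux_hq hs
  have h2 : HasDerivAt (fun t : ℝ => t^2) (2*x) x := by simpa using hasDerivAt_pow 2 x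
  have hA : HasDerivAt (fun t : ℝ => t) 1 x := hasDerivAt_id x
  have main := h2.mul ((((hA.const_mul 2).mul hq).add_const 1).sub h2)
  refine main.congr_deriv ?_
  simp only [Pi.add_apply, Pi.sub_apply, Pi.mul_apply]
  field_simp
  ring

/-- The maximizer `μ_s` of `f(μ) = μ√(2μcot(μ) + 1 - μ²)` on `[0, μ₂]` is the unique
solution in `(0, μ₂)` of `1 = 2μ² - 3μcot(μ) + μ²csc²(μ)`, and at any critical point
of `f` in `(0, μ₂)` one has `(f²)'(μ) = -2μ(-1 + 2μ² - 3μcot(μ) + μ²csc²(μ))`. -/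
theorem stmt8 (μ₂ : ℝ) (h0 : 0 < μ₂) (hπ : μ₂ < Real.pi)
    (hz : 2 * μ₂ * Real.cot μ₂ + 1 - μ₂ ^ 2 = 0)
    (hmin : ∀ μ ∈ Set.Ioo (0 : ℝ) μ₂, 2 * μ * Real.cot μ + 1 - μ ^ 2 ≠ 0)
    (f : ℝ → ℝ)
    (hf : ∀ μ, f μ = μ * Real.sqrt (2 * μ * Real.cot μ + 1 - μ ^ 2))
    (μs : ℝ) (hμs : μs ∈ Set.Ioo (0 : ℝ) μ₂)
    (hmax : ∀ μ ∈ Set.Icc (0 : ℝ) μ₂, f μ ≤ f μs) :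
    (1 = 2 * μs ^ 2 - 3 * μs * Real.cot μs + μs ^ 2 * ((Real.sin μs)⁻¹) ^ 2) ∧
    (∀ μ ∈ Set.Ioo (0 : ℝ) μ₂,
      1 = 2 * μ ^ 2 - 3 * μ * Real.cot μ + μ ^ 2 * ((Real.sin μ)⁻¹) ^ 2 → μ = μs) ∧
    (∀ μ ∈ Set.Ioo (0 : ℝ) μ₂, deriv f μ = 0 →
      deriv (fun x => f x ^ 2) μ =
        -2 * μ * (-1 + 2 * μ ^ 2 - 3 * μ * Real.cot μ + μ ^ 2 * ((Real.sin μ)⁻¹) ^ 2)) := by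
  simp only [Real.cot_eq_cos_div_sin] at hmin hf ⊢
  -- sin is nonzero on (0, π)
  have hsne : ∀ x : ℝ, 0 < x → x < π → sin x ≠ 0 := fun x h1 h2 =>
    ne_of_gt (sin_pos_of_pos_of_lt_pi h1 h2)
  -- g is positive on (0, μ₂)
  have gsmall : ∀ x : ℝ, 0 < x → x ≤ 1 → 0 < 2*x*(cos x/sin x) + 1 - x^2 := by
    intro x hx h1
    have hπx : x < π := lt_of_le_of_lt h1 (by nlinarith [pi_gt_three])
    have hs : 0 < sin x := sin_pos_of_pos_of_lt_pi hx hπx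
    have hc : cos 1 ≤ cos x := cos_le_cos_of_nonneg_of_le_pi hx.le (by nlinarith [pi_gt_three]) h1
    have hratio : 1 ≤ x / sin x := (one_le_div hs).mpr (sin_lt hx).le
    have heq : 2*x*(cos x/sin x) = 2*cos x*(x/sin x) := by ring
    nlinarith [cos_one_pos, mul_le_mul_of_nonneg_left hratio (by nlinarith [cos_one_pos] : (0:ℝ) ≤ 2*cos x)]
  have gpos : ∀ μ ∈ Set.Ioo (0:ℝ) μ₂, 0 < 2*μ*(cos μ/sin μ) + 1 - μ^2 := by
    intro μ hμ
    rcases le_or_gt μ 1 with h1 | h1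
    · exact gsmall μ hμ.1 h1
    · rcases (hmin μ hμ).lt_or_gt with hneg | hpos
      · exfalso
        have hcont : ContinuousOn (fun t => 2*t*(cos t/sin t) + 1 - t^2) (Set.Icc 1 μ) := by
          intro t ht
          have h1t : (0:ℝ) < t := lt_of_lt_of_le one_pos ht.1
          have h2t : t < π := lt_of_le_of_lt ht.2 (hμ.2.trans hπ)
          have c0 : ContinuousAt (fun t => Real.cos t / Real.sin t) t :=
            (Real.continuous_cos.continuousAt).div (Real.continuous_sin.continuousAt)
              (hsne t h1t h2t)
          have c1 : ContinuousAt (fun t : ℝ => 2*t) t := by fun_prop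
          have c2 : ContinuousAt (fun t : ℝ => t^2) t := by fun_prop
          exact (((c1.mul c0).add continuousAt_const).sub c2).continuousWithinAt
        have h10 : (0:ℝ) ∈ Set.Ioo ((fun t => 2*t*(cos t/sin t) + 1 - t^2) μ)
            ((fun t => 2*t*(cos t/sin t) + 1 - t^2) 1) := by
          constructor
          · exact hneg
          · simpa using gsmall 1 one_pos le_rfl
        obtain ⟨x, hx, hgx⟩ := intermediate_value_Ioo' h1.le hcont h10
        exact hmin x ⟨lt_trans one_pos hx.1, lt_trans hx.2 hμ.2⟩ hgx
      · exact hpos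
  -- the derivative of f² on (0, μ₂)
  have key3 : ∀ μ ∈ Set.Ioo (0:ℝ) μ₂,
      deriv (fun x => f x ^ 2) μ =
        -2 * μ * (-1 + 2 * μ ^ 2 - 3 * μ * (cos μ / sin μ) + μ ^ 2 * ((sin μ)⁻¹) ^ 2) := by
    intro μ hμ
    have hs := hsne μ hμ.1 (hμ.2.trans hπ)
    have heq : (fun x => f x ^ 2) =ᶠ[nhds μ] (fun x => x^2 * (2*x*(cos x/sin x) + 1 - x^2)) := by
      filter_upwards [Ioo_mem_nhds hμ.1 hμ.2] with x hx
      rw [hf x, mul_pow, sq_sqrt (gpos x hx).le]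
    rw [heq.deriv_eq, (hasDerivAt_Ffun hs).deriv]
  -- conjunct 1
  have hc1 : 1 = 2 * μs ^ 2 - 3 * μs * (cos μs / sin μs) + μs ^ 2 * ((sin μs)⁻¹) ^ 2 := by
    have hloc : IsLocalMax (fun x => f x ^ 2) μs := by
      filter_upwards [Ioo_mem_nhds hμs.1 hμs.2] with x hx
      have hfx : 0 ≤ f x := by
        rw [hf x]; exact mul_nonneg hx.1.le (Real.sqrt_nonneg _)
      have hle := hmax x ⟨hx.1.le, hx.2.le⟩
      show f x ^ 2 ≤ f μs ^ 2
      nlinarith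
    have h0' := hloc.deriv_eq_zero
    rw [key3 μs hμs] at h0'
    rcases mul_eq_zero.mp h0' with h | h
    · exfalso; nlinarith [hμs.1]
    · linarith
  refine ⟨hc1, ?_, fun μ hμ _ => key3 μ hμ⟩
  -- conjunct 2: uniqueness via strict monotonicity of hfun on (0, π)
  have hmono : StrictMonoOn
      (fun t => -1 + 2*t^2 - 3*t*(cos t/sin t) + t^2*((sin t)⁻¹)^2) (Set.Ioo 0 π) := by
    apply strictMonoOn_of_deriv_pos (convex_Ioo 0 π)
    · intro t ht
      exact (hasDerivAt_hfun (hsne t ht.1 ht.2)).differentiableAt.continuousAt.continuousWithinAt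
    · intro t ht
      rw [interior_Ioo] at ht
      rw [(hasDerivAt_hfun (hsne t ht.1 ht.2)).deriv]
      exact div_pos (ppos ht.1 ht.2) (pow_pos (sin_pos_of_pos_of_lt_pi ht.1 ht.2) 3)
  intro μ hμ hE
  have hμπ : μ ∈ Set.Ioo (0:ℝ) π := ⟨hμ.1, hμ.2.trans hπ⟩
  have hμsπ : μs ∈ Set.Ioo (0:ℝ) π := ⟨hμs.1, hμs.2.trans hπ⟩
  apply hmono.injOn hμπ hμsπ
  simp only
  linarith
end

section
/- Let w ∈ ℂ and τ ∈ ℝ, and suppose the 2×2 matrix M_w = [[w − w² + τe^w, −w − w² + τe^{−w}], [−we^w − w²e^w − τ, we^{−w} − w²e^{−w} − τ]] is the zero matrix. Then τ = 0 and w = 0. -/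
/-- If all four entries of the boundary-condition matrix `M_w` vanish, then `τ = 0`
and `w = 0`. -/
theorem stmt14 (w : ℂ) (τ : ℝ)
    (h11 : w - w ^ 2 + (τ : ℂ) * Complex.exp w = 0)
    (h12 : -w - w ^ 2 + (τ : ℂ) * Complex.exp (-w) = 0)
    (h21 : -w * Complex.exp w - w ^ 2 * Complex.exp w - (τ : ℂ) = 0)
    (h22 : w * Complex.exp (-w) - w ^ 2 * Complex.exp (-w) - (τ : ℂ) = 0) :
    τ = 0 ∧ w = 0 := by
  have hexp : Complex.exp (-w) * Complex.exp w = 1 := by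
    rw [← Complex.exp_add]; simp
  -- from h22: τ = (w - w²) * exp(-w), so τ * exp w = w - w²
  have h1 : (τ : ℂ) * Complex.exp w = w - w ^ 2 := by
    have := congrArg (· * Complex.exp w) h22
    simp only [sub_mul, zero_mul] at this
    calc (τ : ℂ) * Complex.exp w
        = w * (Complex.exp (-w) * Complex.exp w)
          - w ^ 2 * (Complex.exp (-w) * Complex.exp w) := by linear_combination -this
      _ = w - w ^ 2 := by rw [hexp]; ring
  -- from h11: τ * exp w = w² - w
  have h2 : (τ : ℂ) * Complex.exp w = w ^ 2 - w := by linear_combination h11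
  have hws : w ^ 2 = w := by linear_combination (h1 - h2) / 2
  have hτ : (τ : ℂ) = 0 := by
    have h0 : (τ : ℂ) * Complex.exp w = 0 := by linear_combination (h1 + h2) / 2
    rcases mul_eq_zero.mp h0 with h | h
    · exact h
    · exact absurd h (Complex.exp_ne_zero w)
  have hτr : τ = 0 := by exact_mod_cast hτ
  refine ⟨hτr, ?_⟩
  -- from h12: w + w² = τ * exp(-w) = 0
  have : -w - w ^ 2 = 0 := by
    have := h12; rw [hτ] at this; simpa using this
  have : (2 : ℂ) * w = 0 := by linear_combination -this - hws
  simpa using this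
end

section
/- Let μ_s ∈ (0, π) solve 1 = 2μ² − 3μ cot μ + μ² csc²μ and let μ_p ∈ (0, π/2) be the smallest positive solution of cot μ = μ. Then τ_p := μ_p/sin(μ_p) < τ_s := √(2μ_s³ cot μ_s + μ_s² − μ_s⁴); numerically τ_p ≈ 1.1349 < τ_s ≈ 1.1474. -/
open Real

lemma nonneg_of_deriv (f f' : ℝ → ℝ) (hd : ∀ x, HasDerivAt f (f' x) x)
    (h0 : f 0 = 0) (hf' : ∀ x, 0 < x → 0 ≤ f' x) {x : ℝ} (hx : 0 ≤ x) : 0 ≤ f x := by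
  have hmono : MonotoneOn f (Set.Ici 0) := by
    apply monotoneOn_of_deriv_nonneg (convex_Ici 0)
    · exact fun y _ => (hd y).continuousAt.continuousWithinAt
    · exact fun y _ => (hd y).differentiableAt.differentiableWithinAt
    · intro y hy
      rw [interior_Ici] at hy
      rw [(hd y).deriv]
      exact hf' y hy
  have h := hmono Set.self_mem_Ici hx hx
  rwa [h0] at h

lemma sin_ge3 {x : ℝ} (hx : 0 ≤ x) : x - x^3/6 ≤ sin x := by
  have h := nonneg_of_deriv (fun y => Real.sin y - (y - y^3/6))
      (fun y => Real.cos y - (1 - y^2/2)) ?_ (by norm_num) ?_ hx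
  · linarith [h]
  · intro y
    have h := (Real.hasDerivAt_sin y).sub ((hasDerivAt_id' y).sub ((hasDerivAt_pow 3 y).div_const 6))
    refine HasDerivAt.congr_deriv h ?_
    norm_num; ring
  · exact fun y _ => by linarith [Real.one_sub_sq_div_two_le_cos (x := y)]

lemma cos_le4 {x : ℝ} (hx : 0 ≤ x) : cos x ≤ 1 - x^2/2 + x^4/24 := by
  have h := nonneg_of_deriv (fun y => (1 - y^2/2 + y^4/24) - Real.cos y)
      (fun y => (-y + y^3/6) + Real.sin y) ?_ (by norm_num) ?_ hx
  · linarith [h]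
  · intro y
    have h := ((((hasDerivAt_const y (1:ℝ)).sub ((hasDerivAt_pow 2 y).div_const 2)).add
      ((hasDerivAt_pow 4 y).div_const 24)).sub (Real.hasDerivAt_cos y))
    refine HasDerivAt.congr_deriv h ?_
    norm_num; ring
  · intro y hy
    have := sin_ge3 hy.le
    linarith

lemma sin_le5 {x : ℝ} (hx : 0 ≤ x) : sin x ≤ x - x^3/6 + x^5/120 := by
  have h := nonneg_of_deriv (fun y => (y - y^3/6 + y^5/120) - Real.sin y)
      (fun y => (1 - y^2/2 + y^4/24) - Real.cos y) ?_ (by norm_num) ?_ hx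
  · linarith [h]
  · intro y
    have h := ((((hasDerivAt_id' y).sub ((hasDerivAt_pow 3 y).div_const 6)).add
      ((hasDerivAt_pow 5 y).div_const 120)).sub (Real.hasDerivAt_sin y))
    refine HasDerivAt.congr_deriv h ?_
    norm_num; ring
  · intro y hy
    have := cos_le4 hy.le
    linarith

lemma cos_ge6 {x : ℝ} (hx : 0 ≤ x) : 1 - x^2/2 + x^4/24 - x^6/720 ≤ cos x := by
  have h := nonneg_of_deriv (fun y => Real.cos y - (1 - y^2/2 + y^4/24 - y^6/720))
      (fun y => (y - y^3/6 + y^5/120) - Real.sin y) ?_ (by norm_num) ?_ hx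
  · linarith [h]
  · intro y
    have h := (Real.hasDerivAt_cos y).sub ((((hasDerivAt_const y (1:ℝ)).sub
      ((hasDerivAt_pow 2 y).div_const 2)).add ((hasDerivAt_pow 4 y).div_const 24)).sub
      ((hasDerivAt_pow 6 y).div_const 720))
    refine HasDerivAt.congr_deriv h ?_
    norm_num; ring
  · intro y hy
    have := sin_le5 hy.le
    linarith

lemma sin_ge7 {x : ℝ} (hx : 0 ≤ x) : x - x^3/6 + x^5/120 - x^7/5040 ≤ sin x := by
  have h := nonneg_of_deriv (fun y => Real.sin y - (y - y^3/6 + y^5/120 - y^7/5040))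
      (fun y => Real.cos y - (1 - y^2/2 + y^4/24 - y^6/720)) ?_ (by norm_num) ?_ hx
  · linarith [h]
  · intro y
    have h := (Real.hasDerivAt_sin y).sub ((((hasDerivAt_id' y).sub
      ((hasDerivAt_pow 3 y).div_const 6)).add ((hasDerivAt_pow 5 y).div_const 120)).sub
      ((hasDerivAt_pow 7 y).div_const 5040))
    refine HasDerivAt.congr_deriv h ?_
    norm_num; ring
  · intro y hy
    have := cos_ge6 hy.le
    linarith

lemma cos_le8 {x : ℝ} (hx : 0 ≤ x) : cos x ≤ 1 - x^2/2 + x^4/24 - x^6/720 + x^8/40320 := by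
  have h := nonneg_of_deriv
      (fun y => (1 - y^2/2 + y^4/24 - y^6/720 + y^8/40320) - Real.cos y)
      (fun y => Real.sin y - (y - y^3/6 + y^5/120 - y^7/5040)) ?_ (by norm_num) ?_ hx
  · linarith [h]
  · intro y
    have h := (((((hasDerivAt_const y (1:ℝ)).sub ((hasDerivAt_pow 2 y).div_const 2)).add
      ((hasDerivAt_pow 4 y).div_const 24)).sub ((hasDerivAt_pow 6 y).div_const 720)).add
      ((hasDerivAt_pow 8 y).div_const 40320)).sub (Real.hasDerivAt_cos y)
    refine HasDerivAt.congr_deriv h ?_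
    norm_num; ring
  · intro y hy
    have := sin_ge7 hy.le
    linarith

set_option maxHeartbeats 1000000 in
lemma regionGlo (x : ℝ) (h1 : (89/100 : ℝ) ≤ x) (h2 : x ≤ (1859/2000 : ℝ)) :
    0 < (3 : ℝ) * x^2 + ((-13 : ℝ)/3) * x^4 + ((10 : ℝ)/9) * x^6 + ((-31 : ℝ)/240) * x^8 + ((101 : ℝ)/14400) * x^10 + ((-11 : ℝ)/86400) * x^12 + ((-1 : ℝ)/518400) * x^14 := by
  rcases le_or_gt x (2309/2500 : ℝ) with hc7 | hc7
  · rcases le_or_gt x (2273/2500 : ℝ) with hc3 | hc3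
    · rcases le_or_gt x (2241/2500 : ℝ) with hc1 | hc1
      · have b2 : (7921/10000 : ℝ) ≤ x^2 := by
          calc ((7921/10000 : ℝ)) = ((89/100 : ℝ))^2 := by norm_num
            _ ≤ x^2 := pow_le_pow_left₀ (by norm_num) (by linarith) 2
        have b4 : x^4 ≤ (25221297570561/39062500000000 : ℝ) := by
          calc x^4 ≤ ((2241/2500 : ℝ))^4 := pow_le_pow_left₀ (by linarith) (by linarith) 4
            _ = (25221297570561/39062500000000 : ℝ) := by norm_num
        have b6 : (496981290961/1000000000000 : ℝ) ≤ x^6 := by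
          calc ((496981290961/1000000000000 : ℝ)) = ((89/100 : ℝ))^6 := by norm_num
            _ ≤ x^6 := pow_le_pow_left₀ (by norm_num) (by linarith) 6
        have b8 : x^8 ≤ (636113851142786200773854721/1525878906250000000000000000 : ℝ) := by
          calc x^8 ≤ ((2241/2500 : ℝ))^8 := pow_le_pow_left₀ (by linarith) (by linarith) 8
            _ = (636113851142786200773854721/1525878906250000000000000000 : ℝ) := by norm_num
        have b10 : (31181719929966183601/100000000000000000000 : ℝ) ≤ x^10 := by
          calc ((31181719929966183601/100000000000000000000 : ℝ)) = ((89/100 : ℝ))^10 := by norm_num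
            _ ≤ x^10 := pow_le_pow_left₀ (by norm_num) (by linarith) 10
        have b12 : x^12 ≤ (16043616728427755199098257252924460468481/59604644775390625000000000000000000000000 : ℝ) := by
          calc x^12 ≤ ((2241/2500 : ℝ))^12 := pow_le_pow_left₀ (by linarith) (by linarith) 12
            _ = (16043616728427755199098257252924460468481/59604644775390625000000000000000000000000 : ℝ) := by norm_num
        have b14 : x^14 ≤ (80572342743119189258042574883024127354009528961/372529029846191406250000000000000000000000000000 : ℝ) := by
          calc x^14 ≤ ((2241/2500 : ℝ))^14 := pow_le_pow_left₀ (by linarith) (by linarith) 14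
            _ = (80572342743119189258042574883024127354009528961/372529029846191406250000000000000000000000000000 : ℝ) := by norm_num
        linarith
      · rcases le_or_gt x (2257/2500 : ℝ) with hc2 | hc2
        · have b2 : (5022081/6250000 : ℝ) ≤ x^2 := by
            calc ((5022081/6250000 : ℝ)) = ((2241/2500 : ℝ))^2 := by norm_num
              _ ≤ x^2 := pow_le_pow_left₀ (by norm_num) (by linarith) 2
          have b4 : x^4 ≤ (25949335214401/39062500000000 : ℝ) := by
            calc x^4 ≤ ((2257/2500 : ℝ))^4 := pow_le_pow_left₀ (by linarith) (by linarith) 4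
              _ = (25949335214401/39062500000000 : ℝ) := by norm_num
          have b6 : (126663399324460557441/244140625000000000000 : ℝ) ≤ x^6 := by
            calc ((126663399324460557441/244140625000000000000 : ℝ)) = ((2241/2500 : ℝ))^6 := by norm_num
              _ ≤ x^6 := pow_le_pow_left₀ (by norm_num) (by linarith) 6
          have b8 : x^8 ≤ (673367998069351792637788801/1525878906250000000000000000 : ℝ) := by
            calc x^8 ≤ ((2257/2500 : ℝ))^8 := pow_le_pow_left₀ (by linarith) (by linarith) 8
              _ = (673367998069351792637788801/1525878906250000000000000000 : ℝ) := by norm_num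
          have b10 : (3194615285661014865968561091094401/9536743164062500000000000000000000 : ℝ) ≤ x^10 := by
            calc ((3194615285661014865968561091094401/9536743164062500000000000000000000 : ℝ)) = ((2241/2500 : ℝ))^10 := by norm_num
              _ ≤ x^10 := pow_le_pow_left₀ (by norm_num) (by linarith) 10
          have b12 : x^12 ≤ (17473451904551735054075608949731891723201/59604644775390625000000000000000000000000 : ℝ) := by
            calc x^12 ≤ ((2257/2500 : ℝ))^12 := pow_le_pow_left₀ (by linarith) (by linarith) 12
              _ = (17473451904551735054075608949731891723201/59604644775390625000000000000000000000000 : ℝ) := by norm_num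
          have b14 : x^14 ≤ (89010620200929861400478801694772793300680330849/372529029846191406250000000000000000000000000000 : ℝ) := by
            calc x^14 ≤ ((2257/2500 : ℝ))^14 := pow_le_pow_left₀ (by linarith) (by linarith) 14
              _ = (89010620200929861400478801694772793300680330849/372529029846191406250000000000000000000000000000 : ℝ) := by norm_num
          linarith
        · have b2 : (5094049/6250000 : ℝ) ≤ x^2 := by
            calc ((5094049/6250000 : ℝ)) = ((2257/2500 : ℝ))^2 := by norm_num
              _ ≤ x^2 := pow_le_pow_left₀ (by norm_num) (by linarith) 2
          have b4 : x^4 ≤ (26693021907841/39062500000000 : ℝ) := by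
            calc x^4 ≤ ((2273/2500 : ℝ))^4 := pow_le_pow_left₀ (by linarith) (by linarith) 4
              _ = (26693021907841/39062500000000 : ℝ) := by norm_num
          have b6 : (132187185099584199649/244140625000000000000 : ℝ) ≤ x^6 := by
            calc ((132187185099584199649/244140625000000000000 : ℝ)) = ((2257/2500 : ℝ))^6 := by norm_num
              _ ≤ x^6 := pow_le_pow_left₀ (by norm_num) (by linarith) 6
          have b8 : x^8 ≤ (712517418572479579497281281/1525878906250000000000000000 : ℝ) := by
            calc x^8 ≤ ((2273/2500 : ℝ))^8 := pow_le_pow_left₀ (by linarith) (by linarith) 8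
              _ = (712517418572479579497281281/1525878906250000000000000000 : ℝ) := by norm_num
          have b10 : (3430169577197183429934735403945249/9536743164062500000000000000000000 : ℝ) ≤ x^10 := by
            calc ((3430169577197183429934735403945249/9536743164062500000000000000000000 : ℝ)) = ((2257/2500 : ℝ))^10 := by norm_num
              _ ≤ x^10 := pow_le_pow_left₀ (by norm_num) (by linarith) 10
          have b12 : x^12 ≤ (19019243063673513231850532607031236424321/59604644775390625000000000000000000000000 : ℝ) := by
            calc x^12 ≤ ((2273/2500 : ℝ))^12 := pow_le_pow_left₀ (by linarith) (by linarith) 12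
              _ = (19019243063673513231850532607031236424321/59604644775390625000000000000000000000000 : ℝ) := by norm_num
          have b14 : x^14 ≤ (98263470846518052644239500379672486892110751809/372529029846191406250000000000000000000000000000 : ℝ) := by
            calc x^14 ≤ ((2273/2500 : ℝ))^14 := pow_le_pow_left₀ (by linarith) (by linarith) 14
              _ = (98263470846518052644239500379672486892110751809/372529029846191406250000000000000000000000000000 : ℝ) := by norm_num
          linarith
    · rcases le_or_gt x (2297/2500 : ℝ) with hc5 | hc5
      · rcases le_or_gt x (2289/2500 : ℝ) with hc4 | hc4
        · have b2 : (5166529/6250000 : ℝ) ≤ x^2 := by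
            calc ((5166529/6250000 : ℝ)) = ((2273/2500 : ℝ))^2 := by norm_num
              _ ≤ x^2 := pow_le_pow_left₀ (by norm_num) (by linarith) 2
          have b4 : x^4 ≤ (27452580309441/39062500000000 : ℝ) := by
            calc x^4 ≤ ((2289/2500 : ℝ))^4 := pow_le_pow_left₀ (by linarith) (by linarith) 4
              _ = (27452580309441/39062500000000 : ℝ) := by norm_num
          have b6 : (137910271784495853889/244140625000000000000 : ℝ) ≤ x^6 := by
            calc ((137910271784495853889/244140625000000000000 : ℝ)) = ((2273/2500 : ℝ))^6 := by norm_num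
              _ ≤ x^6 := pow_le_pow_left₀ (by norm_num) (by linarith) 6
          have b8 : x^8 ≤ (753644165646307711313732481/1525878906250000000000000000 : ℝ) := by
            calc x^8 ≤ ((2289/2500 : ℝ))^8 := pow_le_pow_left₀ (by linarith) (by linarith) 8
              _ = (753644165646307711313732481/1525878906250000000000000000 : ℝ) := by norm_num
          have b10 : (3681241906059854349380509159443649/9536743164062500000000000000000000 : ℝ) ≤ x^10 := by
            calc ((3681241906059854349380509159443649/9536743164062500000000000000000000 : ℝ)) = ((2273/2500 : ℝ))^10 := by norm_num
              _ ≤ x^10 := pow_le_pow_left₀ (by norm_num) (by linarith) 10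
          have b12 : x^12 ≤ (20689476982146918411216250529883672653121/59604644775390625000000000000000000000000 : ℝ) := by
            calc x^12 ≤ ((2289/2500 : ℝ))^12 := pow_le_pow_left₀ (by linarith) (by linarith) 12
              _ = (20689476982146918411216250529883672653121/59604644775390625000000000000000000000000 : ℝ) := by norm_num
          have b14 : x^14 ≤ (108402949126975404100854180192586630423153195041/372529029846191406250000000000000000000000000000 : ℝ) := by
            calc x^14 ≤ ((2289/2500 : ℝ))^14 := pow_le_pow_left₀ (by linarith) (by linarith) 14
              _ = (108402949126975404100854180192586630423153195041/372529029846191406250000000000000000000000000000 : ℝ) := by norm_num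
          linarith
        · have b2 : (5239521/6250000 : ℝ) ≤ x^2 := by
            calc ((5239521/6250000 : ℝ)) = ((2289/2500 : ℝ))^2 := by norm_num
              _ ≤ x^2 := pow_le_pow_left₀ (by norm_num) (by linarith) 2
          have b4 : x^4 ≤ (27838381411681/39062500000000 : ℝ) := by
            calc x^4 ≤ ((2297/2500 : ℝ))^4 := pow_le_pow_left₀ (by linarith) (by linarith) 4
              _ = (27838381411681/39062500000000 : ℝ) := by norm_num
          have b6 : (143838371035502617761/244140625000000000000 : ℝ) ≤ x^6 := by
            calc ((143838371035502617761/244140625000000000000 : ℝ)) = ((2289/2500 : ℝ))^6 := by norm_num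
              _ ≤ x^6 := pow_le_pow_left₀ (by norm_num) (by linarith) 6
          have b8 : x^8 ≤ (774975479622226226403245761/1525878906250000000000000000 : ℝ) := by
            calc x^8 ≤ ((2297/2500 : ℝ))^8 := pow_le_pow_left₀ (by linarith) (by linarith) 8
              _ = (774975479622226226403245761/1525878906250000000000000000 : ℝ) := by norm_num
          have b10 : (3948734432431307825890238922581601/9536743164062500000000000000000000 : ℝ) ≤ x^10 := by
            calc ((3948734432431307825890238922581601/9536743164062500000000000000000000 : ℝ)) = ((2289/2500 : ℝ))^10 := by norm_num
              _ ≤ x^10 := pow_le_pow_left₀ (by norm_num) (by linarith) 10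
          have b12 : x^12 ≤ (21574062986423950185163530243267559134241/59604644775390625000000000000000000000000 : ℝ) := by
            calc x^12 ≤ ((2297/2500 : ℝ))^12 := pow_le_pow_left₀ (by linarith) (by linarith) 12
              _ = (21574062986423950185163530243267559134241/59604644775390625000000000000000000000000 : ℝ) := by norm_num
          have b14 : x^14 ≤ (113829265295536923782511484741300484912114572369/372529029846191406250000000000000000000000000000 : ℝ) := by
            calc x^14 ≤ ((2297/2500 : ℝ))^14 := pow_le_pow_left₀ (by linarith) (by linarith) 14
              _ = (113829265295536923782511484741300484912114572369/372529029846191406250000000000000000000000000000 : ℝ) := by norm_num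
          linarith
      · rcases le_or_gt x (461/500 : ℝ) with hc6 | hc6
        · have b2 : (5276209/6250000 : ℝ) ≤ x^2 := by
            calc ((5276209/6250000 : ℝ)) = ((2297/2500 : ℝ))^2 := by norm_num
              _ ≤ x^2 := pow_le_pow_left₀ (by norm_num) (by linarith) 2
          have b4 : x^4 ≤ (45165175441/62500000000 : ℝ) := by
            calc x^4 ≤ ((461/500 : ℝ))^4 := pow_le_pow_left₀ (by linarith) (by linarith) 4
              _ = (45165175441/62500000000 : ℝ) := by norm_num
          have b6 : (146881118549743997329/244140625000000000000 : ℝ) ≤ x^6 := by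
            calc ((146881118549743997329/244140625000000000000 : ℝ)) = ((2297/2500 : ℝ))^6 := by norm_num
              _ ≤ x^6 := pow_le_pow_left₀ (by norm_num) (by linarith) 6
          have b8 : x^8 ≤ (2039893072616309544481/3906250000000000000000 : ℝ) := by
            calc x^8 ≤ ((461/500 : ℝ))^8 := pow_le_pow_left₀ (by linarith) (by linarith) 8
              _ = (2039893072616309544481/3906250000000000000000 : ℝ) := by norm_num
          have b10 : (4088932600362106615784842913400049/9536743164062500000000000000000000 : ℝ) ≤ x^10 := by
            calc ((4088932600362106615784842913400049/9536743164062500000000000000000000 : ℝ)) = ((2297/2500 : ℝ))^10 := by norm_num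
              _ ≤ x^10 := pow_le_pow_left₀ (by norm_num) (by linarith) 10
          have b12 : x^12 ≤ (92132128505596173454447158291121/244140625000000000000000000000000 : ℝ) := by
            calc x^12 ≤ ((461/500 : ℝ))^12 := pow_le_pow_left₀ (by linarith) (by linarith) 12
              _ = (92132128505596173454447158291121/244140625000000000000000000000000 : ℝ) := by norm_num
          have b14 : x^14 ≤ (19580012082137804378712564527187326041/61035156250000000000000000000000000000 : ℝ) := by
            calc x^14 ≤ ((461/500 : ℝ))^14 := pow_le_pow_left₀ (by linarith) (by linarith) 14
              _ = (19580012082137804378712564527187326041/61035156250000000000000000000000000000 : ℝ) := by norm_num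
          linarith
        · have b2 : (212521/250000 : ℝ) ≤ x^2 := by
            calc ((212521/250000 : ℝ)) = ((461/500 : ℝ))^2 := by norm_num
              _ ≤ x^2 := pow_le_pow_left₀ (by norm_num) (by linarith) 2
          have b4 : x^4 ≤ (28424689653361/39062500000000 : ℝ) := by
            calc x^4 ≤ ((2309/2500 : ℝ))^4 := pow_le_pow_left₀ (by linarith) (by linarith) 4
              _ = (28424689653361/39062500000000 : ℝ) := by norm_num
          have b6 : (9598548249896761/15625000000000000 : ℝ) ≤ x^6 := by
            calc ((9598548249896761/15625000000000000 : ℝ)) = ((461/500 : ℝ))^6 := by norm_num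
              _ ≤ x^6 := pow_le_pow_left₀ (by norm_num) (by linarith) 6
          have b8 : x^8 ≤ (807962981889887886338596321/1525878906250000000000000000 : ℝ) := by
            calc x^8 ≤ ((2309/2500 : ℝ))^8 := pow_le_pow_left₀ (by linarith) (by linarith) 8
              _ = (807962981889887886338596321/1525878906250000000000000000 : ℝ) := by norm_num
          have b10 : (433520115685490720702646601/976562500000000000000000000 : ℝ) ≤ x^10 := by
            calc ((433520115685490720702646601/976562500000000000000000000 : ℝ)) = ((461/500 : ℝ))^10 := by norm_num
              _ ≤ x^10 := pow_le_pow_left₀ (by norm_num) (by linarith) 10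
          have b12 : x^12 ≤ (22966097011624197224600988427040799884881/59604644775390625000000000000000000000000 : ℝ) := by
            calc x^12 ≤ ((2309/2500 : ℝ))^12 := pow_le_pow_left₀ (by linarith) (by linarith) 12
              _ = (22966097011624197224600988427040799884881/59604644775390625000000000000000000000000 : ℝ) := by norm_num
          have b14 : x^14 ≤ (122443309861631186643212902379987910811045238761/372529029846191406250000000000000000000000000000 : ℝ) := by
            calc x^14 ≤ ((2309/2500 : ℝ))^14 := pow_le_pow_left₀ (by linarith) (by linarith) 14
              _ = (122443309861631186643212902379987910811045238761/372529029846191406250000000000000000000000000000 : ℝ) := by norm_num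
          linarith
  · rcases le_or_gt x (2319/2500 : ℝ) with hc10 | hc10
    · rcases le_or_gt x (2313/2500 : ℝ) with hc8 | hc8
      · have b2 : (5331481/6250000 : ℝ) ≤ x^2 := by
          calc ((5331481/6250000 : ℝ)) = ((2309/2500 : ℝ))^2 := by norm_num
            _ ≤ x^2 := pow_le_pow_left₀ (by norm_num) (by linarith) 2
        have b4 : x^4 ≤ (28622168300961/39062500000000 : ℝ) := by
          calc x^4 ≤ ((2313/2500 : ℝ))^4 := pow_le_pow_left₀ (by linarith) (by linarith) 4
            _ = (28622168300961/39062500000000 : ℝ) := by norm_num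
        have b6 : (151545692817790757641/244140625000000000000 : ℝ) ≤ x^6 := by
          calc ((151545692817790757641/244140625000000000000 : ℝ)) = ((2309/2500 : ℝ))^6 := by norm_num
            _ ≤ x^6 := pow_le_pow_left₀ (by norm_num) (by linarith) 6
        have b8 : x^8 ≤ (819228518248536697473523521/1525878906250000000000000000 : ℝ) := by
          calc x^8 ≤ ((2313/2500 : ℝ))^8 := pow_le_pow_left₀ (by linarith) (by linarith) 8
            _ = (819228518248536697473523521/1525878906250000000000000000 : ℝ) := by norm_num
        have b10 : (4307639286649281358144385852081401/9536743164062500000000000000000000 : ℝ) ≤ x^10 := by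
          calc ((4307639286649281358144385852081401/9536743164062500000000000000000000 : ℝ)) = ((2309/2500 : ℝ))^10 := by norm_num
            _ ≤ x^10 := pow_le_pow_left₀ (by norm_num) (by linarith) 10
        have b12 : x^12 ≤ (23448096526256517189850218778342640403681/59604644775390625000000000000000000000000 : ℝ) := by
          calc x^12 ≤ ((2313/2500 : ℝ))^12 := pow_le_pow_left₀ (by linarith) (by linarith) 12
            _ = (23448096526256517189850218778342640403681/59604644775390625000000000000000000000000 : ℝ) := by norm_num
        have b14 : x^14 ≤ (125446589524480053013665785107350997537840835889/372529029846191406250000000000000000000000000000 : ℝ) := by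
          calc x^14 ≤ ((2313/2500 : ℝ))^14 := pow_le_pow_left₀ (by linarith) (by linarith) 14
            _ = (125446589524480053013665785107350997537840835889/372529029846191406250000000000000000000000000000 : ℝ) := by norm_num
        linarith
      · rcases le_or_gt x (2317/2500 : ℝ) with hc9 | hc9
        · have b2 : (5349969/6250000 : ℝ) ≤ x^2 := by
            calc ((5349969/6250000 : ℝ)) = ((2313/2500 : ℝ))^2 := by norm_num
              _ ≤ x^2 := pow_le_pow_left₀ (by norm_num) (by linarith) 2
          have b4 : x^4 ≤ (28820674143121/39062500000000 : ℝ) := by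
            calc x^4 ≤ ((2317/2500 : ℝ))^4 := pow_le_pow_left₀ (by linarith) (by linarith) 4
              _ = (28820674143121/39062500000000 : ℝ) := by norm_num
          have b6 : (153127713122924020209/244140625000000000000 : ℝ) ≤ x^6 := by
            calc ((153127713122924020209/244140625000000000000 : ℝ)) = ((2313/2500 : ℝ))^6 := by norm_num
              _ ≤ x^6 := pow_le_pow_left₀ (by norm_num) (by linarith) 6
          have b8 : x^8 ≤ (830631258063963387591620641/1525878906250000000000000000 : ℝ) := by
            calc x^8 ≤ ((2317/2500 : ℝ))^8 := pow_le_pow_left₀ (by linarith) (by linarith) 8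
              _ = (830631258063963387591620641/1525878906250000000000000000 : ℝ) := by norm_num
          have b10 : (4382847176545605626845729158120849/9536743164062500000000000000000000 : ℝ) ≤ x^10 := by
            calc ((4382847176545605626845729158120849/9536743164062500000000000000000000 : ℝ)) = ((2313/2500 : ℝ))^10 := by norm_num
              _ ≤ x^10 := pow_le_pow_left₀ (by norm_num) (by linarith) 10
          have b12 : x^12 ≤ (23939352821752136227086247621432371760561/59604644775390625000000000000000000000000 : ℝ) := by
            calc x^12 ≤ ((2317/2500 : ℝ))^12 := pow_le_pow_left₀ (by linarith) (by linarith) 12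
              _ = (23939352821752136227086247621432371760561/59604644775390625000000000000000000000000 : ℝ) := by norm_num
          have b14 : x^14 ≤ (128518152290695304061614022406935852040482362329/372529029846191406250000000000000000000000000000 : ℝ) := by
            calc x^14 ≤ ((2317/2500 : ℝ))^14 := pow_le_pow_left₀ (by linarith) (by linarith) 14
              _ = (128518152290695304061614022406935852040482362329/372529029846191406250000000000000000000000000000 : ℝ) := by norm_num
          linarith
        · have b2 : (5368489/6250000 : ℝ) ≤ x^2 := by
            calc ((5368489/6250000 : ℝ)) = ((2317/2500 : ℝ))^2 := by norm_num
              _ ≤ x^2 := pow_le_pow_left₀ (by norm_num) (by linarith) 2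
          have b4 : x^4 ≤ (28920313373121/39062500000000 : ℝ) := by
            calc x^4 ≤ ((2319/2500 : ℝ))^4 := pow_le_pow_left₀ (by linarith) (by linarith) 4
              _ = (28920313373121/39062500000000 : ℝ) := by norm_num
          have b6 : (154723472109929514169/244140625000000000000 : ℝ) ≤ x^6 := by
            calc ((154723472109929514169/244140625000000000000 : ℝ)) = ((2317/2500 : ℝ))^6 := by norm_num
              _ ≤ x^6 := pow_le_pow_left₀ (by norm_num) (by linarith) 6
          have b8 : x^8 ≤ (836384525599521352965280641/1525878906250000000000000000 : ℝ) := by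
            calc x^8 ≤ ((2319/2500 : ℝ))^8 := pow_le_pow_left₀ (by linarith) (by linarith) 8
              _ = (836384525599521352965280641/1525878906250000000000000000 : ℝ) := by norm_num
          have b10 : (4459234771972548742688351903381449/9536743164062500000000000000000000 : ℝ) ≤ x^10 := by
            calc ((4459234771972548742688351903381449/9536743164062500000000000000000000 : ℝ)) = ((2317/2500 : ℝ))^10 := by norm_num
              _ ≤ x^10 := pow_le_pow_left₀ (by norm_num) (by linarith) 10
          have b12 : x^12 ≤ (24188502580767300754158401010319111050561/59604644775390625000000000000000000000000 : ℝ) := by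
            calc x^12 ≤ ((2319/2500 : ℝ))^12 := pow_le_pow_left₀ (by linarith) (by linarith) 12
              _ = (24188502580767300754158401010319111050561/59604644775390625000000000000000000000000 : ℝ) := by norm_num
          have b14 : x^14 ≤ (130079985827249740070983636775654712962375973921/372529029846191406250000000000000000000000000000 : ℝ) := by
            calc x^14 ≤ ((2319/2500 : ℝ))^14 := pow_le_pow_left₀ (by linarith) (by linarith) 14
              _ = (130079985827249740070983636775654712962375973921/372529029846191406250000000000000000000000000000 : ℝ) := by norm_num
          linarith
    · rcases le_or_gt x (1161/1250 : ℝ) with hc12 | hc12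
      · rcases le_or_gt x (2321/2500 : ℝ) with hc11 | hc11
        · have b2 : (5377761/6250000 : ℝ) ≤ x^2 := by
            calc ((5377761/6250000 : ℝ)) = ((2319/2500 : ℝ))^2 := by norm_num
              _ ≤ x^2 := pow_le_pow_left₀ (by norm_num) (by linarith) 2
          have b4 : x^4 ≤ (29020210735681/39062500000000 : ℝ) := by
            calc x^4 ≤ ((2321/2500 : ℝ))^4 := pow_le_pow_left₀ (by linarith) (by linarith) 4
              _ = (29020210735681/39062500000000 : ℝ) := by norm_num
          have b6 : (155526533365748562081/244140625000000000000 : ℝ) ≤ x^6 := by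
            calc ((155526533365748562081/244140625000000000000 : ℝ)) = ((2319/2500 : ℝ))^6 := by norm_num
              _ ≤ x^6 := pow_le_pow_left₀ (by norm_num) (by linarith) 6
          have b8 : x^8 ≤ (842172631143334767246533761/1525878906250000000000000000 : ℝ) := by
            calc x^8 ≤ ((2321/2500 : ℝ))^8 := pow_le_pow_left₀ (by linarith) (by linarith) 8
              _ = (842172631143334767246533761/1525878906250000000000000000 : ℝ) := by norm_num
          have b10 : (4497876082772607550643920585224801/9536743164062500000000000000000000 : ℝ) ≤ x^10 := by
            calc ((4497876082772607550643920585224801/9536743164062500000000000000000000 : ℝ)) = ((2319/2500 : ℝ))^10 := by norm_num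
              _ ≤ x^10 := pow_le_pow_left₀ (by norm_num) (by linarith) 10
          have b12 : x^12 ≤ (24440027231602518497955196419007013826241/59604644775390625000000000000000000000000 : ℝ) := by
            calc x^12 ≤ ((2321/2500 : ℝ))^12 := pow_le_pow_left₀ (by linarith) (by linarith) 12
              _ = (24440027231602518497955196419007013826241/59604644775390625000000000000000000000000 : ℝ) := by norm_num
          have b14 : x^14 ≤ (131659428737759262851743059272243962769527142881/372529029846191406250000000000000000000000000000 : ℝ) := by
            calc x^14 ≤ ((2321/2500 : ℝ))^14 := pow_le_pow_left₀ (by linarith) (by linarith) 14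
              _ = (131659428737759262851743059272243962769527142881/372529029846191406250000000000000000000000000000 : ℝ) := by norm_num
          linarith
        · have b2 : (5387041/6250000 : ℝ) ≤ x^2 := by
            calc ((5387041/6250000 : ℝ)) = ((2321/2500 : ℝ))^2 := by norm_num
              _ ≤ x^2 := pow_le_pow_left₀ (by norm_num) (by linarith) 2
          have b4 : x^4 ≤ (1816891022241/2441406250000 : ℝ) := by
            calc x^4 ≤ ((1161/1250 : ℝ))^4 := pow_le_pow_left₀ (by linarith) (by linarith) 4
              _ = (1816891022241/2441406250000 : ℝ) := by norm_num
          have b6 : (156333065061753709921/244140625000000000000 : ℝ) ≤ x^6 := by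
            calc ((156333065061753709921/244140625000000000000 : ℝ)) = ((2321/2500 : ℝ))^6 := by norm_num
              _ ≤ x^6 := pow_le_pow_left₀ (by norm_num) (by linarith) 6
          have b8 : x^8 ≤ (3301092986699945956662081/5960464477539062500000000 : ℝ) := by
            calc x^8 ≤ ((1161/1250 : ℝ))^8 := pow_le_pow_left₀ (by linarith) (by linarith) 8
              _ = (3301092986699945956662081/5960464477539062500000000 : ℝ) := by norm_num
          have b10 : (4536818493047021267882534478391201/9536743164062500000000000000000000 : ℝ) ≤ x^10 := by
            calc ((4536818493047021267882534478391201/9536743164062500000000000000000000 : ℝ)) = ((2321/2500 : ℝ))^10 := by norm_num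
              _ ≤ x^10 := pow_le_pow_left₀ (by norm_num) (by linarith) 10
          have b12 : x^12 ≤ (5997726211117860626339223032292343521/14551915228366851806640625000000000000 : ℝ) := by
            calc x^12 ≤ ((1161/1250 : ℝ))^12 := pow_le_pow_left₀ (by linarith) (by linarith) 12
              _ = (5997726211117860626339223032292343521/14551915228366851806640625000000000000 : ℝ) := by norm_num
          have b14 : x^14 ≤ (8084461112216197813315791848910527971169841/22737367544323205947875976562500000000000000 : ℝ) := by
            calc x^14 ≤ ((1161/1250 : ℝ))^14 := pow_le_pow_left₀ (by linarith) (by linarith) 14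
              _ = (8084461112216197813315791848910527971169841/22737367544323205947875976562500000000000000 : ℝ) := by norm_num
          linarith
      · rcases le_or_gt x (2323/2500 : ℝ) with hc13 | hc13
        · have b2 : (1347921/1562500 : ℝ) ≤ x^2 := by
            calc ((1347921/1562500 : ℝ)) = ((1161/1250 : ℝ))^2 := by norm_num
              _ ≤ x^2 := pow_le_pow_left₀ (by norm_num) (by linarith) 2
          have b4 : x^4 ≤ (29120366676241/39062500000000 : ℝ) := by
            calc x^4 ≤ ((2323/2500 : ℝ))^4 := pow_le_pow_left₀ (by linarith) (by linarith) 4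
              _ = (29120366676241/39062500000000 : ℝ) := by norm_num
          have b6 : (2449025563590110961/3814697265625000000 : ℝ) ≤ x^6 := by
            calc ((2449025563590110961/3814697265625000000 : ℝ)) = ((1161/1250 : ℝ))^6 := by norm_num
              _ ≤ x^6 := pow_le_pow_left₀ (by norm_num) (by linarith) 6
          have b8 : x^8 ≤ (847995755358727305713890081/1525878906250000000000000000 : ℝ) := by
            calc x^8 ≤ ((2323/2500 : ℝ))^8 := pow_le_pow_left₀ (by linarith) (by linarith) 8
              _ = (847995755358727305713890081/1525878906250000000000000000 : ℝ) := by norm_num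
          have b10 : (4449612559725577853849908883601/9313225746154785156250000000000 : ℝ) ≤ x^10 := by
            calc ((4449612559725577853849908883601/9313225746154785156250000000000 : ℝ)) = ((1161/1250 : ℝ))^10 := by norm_num
              _ ≤ x^10 := pow_le_pow_left₀ (by norm_num) (by linarith) 10
          have b12 : x^12 ≤ (24693947335942098036123482385756388265521/59604644775390625000000000000000000000000 : ℝ) := by
            calc x^12 ≤ ((2323/2500 : ℝ))^12 := pow_le_pow_left₀ (by linarith) (by linarith) 12
              _ = (24693947335942098036123482385756388265521/59604644775390625000000000000000000000000 : ℝ) := by norm_num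
          have b14 : x^14 ≤ (133256664133417085953176195579246384932490672409/372529029846191406250000000000000000000000000000 : ℝ) := by
            calc x^14 ≤ ((2323/2500 : ℝ))^14 := pow_le_pow_left₀ (by linarith) (by linarith) 14
              _ = (133256664133417085953176195579246384932490672409/372529029846191406250000000000000000000000000000 : ℝ) := by norm_num
          linarith
        · have b2 : (5396329/6250000 : ℝ) ≤ x^2 := by
            calc ((5396329/6250000 : ℝ)) = ((2323/2500 : ℝ))^2 := by norm_num
              _ ≤ x^2 := pow_le_pow_left₀ (by norm_num) (by linarith) 2
          have b4 : x^4 ≤ (11943113486161/16000000000000 : ℝ) := by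
            calc x^4 ≤ ((1859/2000 : ℝ))^4 := pow_le_pow_left₀ (by linarith) (by linarith) 4
              _ = (11943113486161/16000000000000 : ℝ) := by norm_num
          have b6 : (157143079185632919289/244140625000000000000 : ℝ) ≤ x^6 := by
            calc ((157143079185632919289/244140625000000000000 : ℝ)) = ((2323/2500 : ℝ))^6 := by norm_num
              _ ≤ x^6 := pow_le_pow_left₀ (by norm_num) (by linarith) 6
          have b8 : x^8 ≤ (142637959743320754738517921/256000000000000000000000000 : ℝ) := by
            calc x^8 ≤ ((1859/2000 : ℝ))^8 := pow_le_pow_left₀ (by linarith) (by linarith) 8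
              _ = (142637959743320754738517921/256000000000000000000000000 : ℝ) := by norm_num
          have b10 : (4576064086519205562915730746912649/9536743164062500000000000000000000 : ℝ) ≤ x^10 := by
            calc ((4576064086519205562915730746912649/9536743164062500000000000000000000 : ℝ)) = ((2323/2500 : ℝ))^10 := by norm_num
              _ ≤ x^10 := pow_le_pow_left₀ (by norm_num) (by linarith) 10
          have b12 : x^12 ≤ (1703541340648943915859966427460683991281/4096000000000000000000000000000000000000 : ℝ) := by
            calc x^12 ≤ ((1859/2000 : ℝ))^12 := pow_le_pow_left₀ (by linarith) (by linarith) 12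
              _ = (1703541340648943915859966427460683991281/4096000000000000000000000000000000000000 : ℝ) := by norm_num
          have b14 : x^14 ≤ (5887236151863212948886056637299256052472173561/16384000000000000000000000000000000000000000000 : ℝ) := by
            calc x^14 ≤ ((1859/2000 : ℝ))^14 := pow_le_pow_left₀ (by linarith) (by linarith) 14
              _ = (5887236151863212948886056637299256052472173561/16384000000000000000000000000000000000000000000 : ℝ) := by norm_num
          linarith

set_option maxHeartbeats 1000000 in
lemma regionGhi2 (x : ℝ) (h1 : (233/250 : ℝ) ≤ x) (h2 : x ≤ (19/20 : ℝ)) :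
    (3 : ℝ) * x^2 + ((-13 : ℝ)/3) * x^4 + ((10 : ℝ)/9) * x^6 + ((-41 : ℝ)/315) * x^8 + ((5197 : ℝ)/604800) * x^10 + ((-59 : ℝ)/172800) * x^12 + ((251 : ℝ)/33868800) * x^14 + ((-13 : ℝ)/203212800) * x^16 + ((-1 : ℝ)/1625702400) * x^18 < 0 := by
  rcases le_or_gt x (1169/1250 : ℝ) with hc5 | hc5
  · rcases le_or_gt x (583/625 : ℝ) with hc2 | hc2
    · rcases le_or_gt x (2331/2500 : ℝ) with hc1 | hc1
      · have b2 : x^2 ≤ (5433561/6250000 : ℝ) := by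
          calc x^2 ≤ ((2331/2500 : ℝ))^2 := pow_le_pow_left₀ (by linarith) (by linarith) 2
            _ = (5433561/6250000 : ℝ) := by norm_num
        have b4 : (2947295521/3906250000 : ℝ) ≤ x^4 := by
          calc ((2947295521/3906250000 : ℝ)) = ((233/250 : ℝ))^4 := by norm_num
            _ ≤ x^4 := pow_le_pow_left₀ (by norm_num) (by linarith) 4
        have b6 : x^6 ≤ (160418200800801137481/244140625000000000000 : ℝ) := by
          calc x^6 ≤ ((2331/2500 : ℝ))^6 := pow_le_pow_left₀ (by linarith) (by linarith) 6
            _ = (160418200800801137481/244140625000000000000 : ℝ) := by norm_num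
        have b8 : (8686550888106661441/15258789062500000000 : ℝ) ≤ x^8 := by
          calc ((8686550888106661441/15258789062500000000 : ℝ)) = ((233/250 : ℝ))^8 := by norm_num
            _ ≤ x^8 := pow_le_pow_left₀ (by norm_num) (by linarith) 8
        have b10 : x^10 ≤ (4736120409463730085406526252463801/9536743164062500000000000000000000 : ℝ) := by
          calc x^10 ≤ ((2331/2500 : ℝ))^10 := pow_le_pow_left₀ (by linarith) (by linarith) 10
            _ = (4736120409463730085406526252463801/9536743164062500000000000000000000 : ℝ) := by norm_num
        have b12 : (25601832525455335435322705761/59604644775390625000000000000 : ℝ) ≤ x^12 := by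
          calc ((25601832525455335435322705761/59604644775390625000000000000 : ℝ)) = ((233/250 : ℝ))^12 := by norm_num
            _ ≤ x^12 := pow_le_pow_left₀ (by norm_num) (by linarith) 12
        have b14 : x^14 ≤ (139827254145508839733702398717838269019543540521/372529029846191406250000000000000000000000000000 : ℝ) := by
          calc x^14 ≤ ((2331/2500 : ℝ))^14 := pow_le_pow_left₀ (by linarith) (by linarith) 14
            _ = (139827254145508839733702398717838269019543540521/372529029846191406250000000000000000000000000000 : ℝ) := by norm_num
        have b16 : (75456166331666628614079195878996196481/232830643653869628906250000000000000000 : ℝ) ≤ x^16 := by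
          calc ((75456166331666628614079195878996196481/232830643653869628906250000000000000000 : ℝ)) = ((233/250 : ℝ))^16 := by norm_num
            _ ≤ x^16 := pow_le_pow_left₀ (by norm_num) (by linarith) 16
        have b18 : (4096439813979849600829745465074824510757009/14551915228366851806640625000000000000000000 : ℝ) ≤ x^18 := by
          calc ((4096439813979849600829745465074824510757009/14551915228366851806640625000000000000000000 : ℝ)) = ((233/250 : ℝ))^18 := by norm_num
            _ ≤ x^18 := pow_le_pow_left₀ (by norm_num) (by linarith) 18
        linarith
      · have b2 : x^2 ≤ (339889/390625 : ℝ) := by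
          calc x^2 ≤ ((583/625 : ℝ))^2 := pow_le_pow_left₀ (by linarith) (by linarith) 2
            _ = (339889/390625 : ℝ) := by norm_num
        have b4 : (29523585140721/39062500000000 : ℝ) ≤ x^4 := by
          calc ((29523585140721/39062500000000 : ℝ)) = ((2331/2500 : ℝ))^4 := by norm_num
            _ ≤ x^4 := pow_le_pow_left₀ (by norm_num) (by linarith) 4
        have b6 : x^6 ≤ (39265517766052369/59604644775390625 : ℝ) := by
          calc x^6 ≤ ((583/625 : ℝ))^6 := pow_le_pow_left₀ (by linarith) (by linarith) 6
            _ = (39265517766052369/59604644775390625 : ℝ) := by norm_num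
        have b8 : (871642079561401829372399841/1525878906250000000000000000 : ℝ) ≤ x^8 := by
          calc ((871642079561401829372399841/1525878906250000000000000000 : ℝ)) = ((2331/2500 : ℝ))^8 := by norm_num
            _ ≤ x^8 := pow_le_pow_left₀ (by norm_num) (by linarith) 8
        have b10 : x^10 ≤ (4536130576265116619119118449/9094947017729282379150390625 : ℝ) := by
          calc x^10 ≤ ((583/625 : ℝ))^10 := pow_le_pow_left₀ (by linarith) (by linarith) 10
            _ = (4536130576265116619119118449/9094947017729282379150390625 : ℝ) := by norm_num
        have b12 : (25733999148166154706591570190863463025361/59604644775390625000000000000000000000000 : ℝ) ≤ x^12 := by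
          calc ((25733999148166154706591570190863463025361/59604644775390625000000000000000000000000 : ℝ)) = ((2331/2500 : ℝ))^12 := by norm_num
            _ ≤ x^12 := pow_le_pow_left₀ (by norm_num) (by linarith) 12
        have b14 : x^14 ≤ (524034363370015820330260845810527890129/1387778780781445675529539585113525390625 : ℝ) := by
          calc x^14 ≤ ((583/625 : ℝ))^14 := pow_le_pow_left₀ (by linarith) (by linarith) 14
            _ = (524034363370015820330260845810527890129/1387778780781445675529539585113525390625 : ℝ) := by norm_num
        have b16 : (759759914862125156732295739279696022852100019576825281/2328306436538696289062500000000000000000000000000000000 : ℝ) ≤ x^16 := by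
          calc ((759759914862125156732295739279696022852100019576825281/2328306436538696289062500000000000000000000000000000000 : ℝ)) = ((2331/2500 : ℝ))^16 := by norm_num
            _ ≤ x^16 := pow_le_pow_left₀ (by norm_num) (by linarith) 16
        have b18 : (4128201842758163628739489569416324401624279434471874350655641/14551915228366851806640625000000000000000000000000000000000000 : ℝ) ≤ x^18 := by
          calc ((4128201842758163628739489569416324401624279434471874350655641/14551915228366851806640625000000000000000000000000000000000000 : ℝ)) = ((2331/2500 : ℝ))^18 := by norm_num
            _ ≤ x^18 := pow_le_pow_left₀ (by norm_num) (by linarith) 18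
        linarith
    · rcases le_or_gt x (1167/1250 : ℝ) with hc3 | hc3
      · have b2 : x^2 ≤ (1361889/1562500 : ℝ) := by
          calc x^2 ≤ ((1167/1250 : ℝ))^2 := pow_le_pow_left₀ (by linarith) (by linarith) 2
            _ = (1361889/1562500 : ℝ) := by norm_num
        have b4 : (115524532321/152587890625 : ℝ) ≤ x^4 := by
          calc ((115524532321/152587890625 : ℝ)) = ((583/625 : ℝ))^4 := by norm_num
            _ ≤ x^4 := pow_le_pow_left₀ (by norm_num) (by linarith) 4
        have b6 : x^6 ≤ (2525952248690238369/3814697265625000000 : ℝ) := by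
          calc x^6 ≤ ((1167/1250 : ℝ))^6 := pow_le_pow_left₀ (by linarith) (by linarith) 6
            _ = (2525952248690238369/3814697265625000000 : ℝ) := by norm_num
        have b8 : (13345917567985773647041/23283064365386962890625 : ℝ) ≤ x^8 := by
          calc ((13345917567985773647041/23283064365386962890625 : ℝ)) = ((583/625 : ℝ))^8 := by norm_num
            _ ≤ x^8 := pow_le_pow_left₀ (by norm_num) (by linarith) 8
        have b10 : x^10 ≤ (4684988837315869225861458628449/9313225746154785156250000000000 : ℝ) := by
          calc x^10 ≤ ((1167/1250 : ℝ))^10 := pow_le_pow_left₀ (by linarith) (by linarith) 10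
            _ = (4684988837315869225861458628449/9313225746154785156250000000000 : ℝ) := by norm_num
        have b12 : (1541780885436174222555778050512161/3552713678800500929355621337890625 : ℝ) ≤ x^12 := by
          calc ((1541780885436174222555778050512161/3552713678800500929355621337890625 : ℝ)) = ((583/625 : ℝ))^12 := by norm_num
            _ ≤ x^12 := pow_le_pow_left₀ (by norm_num) (by linarith) 12
        have b14 : x^14 ≤ (8689443918488720601305160017714846163684129/22737367544323205947875976562500000000000000 : ℝ) := by
          calc x^14 ≤ ((1167/1250 : ℝ))^14 := pow_le_pow_left₀ (by linarith) (by linarith) 14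
            _ = (8689443918488720601305160017714846163684129/22737367544323205947875976562500000000000000 : ℝ) := by norm_num
        have b16 : (178113515731471307156232028621694514048055681/542101086242752217003726400434970855712890625 : ℝ) ≤ x^16 := by
          calc ((178113515731471307156232028621694514048055681/542101086242752217003726400434970855712890625 : ℝ)) = ((583/625 : ℝ))^16 := by norm_num
            _ ≤ x^16 := pow_le_pow_left₀ (by norm_num) (by linarith) 16
        have b18 : (60538824748454051118024547976199126685279597359409/211758236813575084767080625169910490512847900390625 : ℝ) ≤ x^18 := by
          calc ((60538824748454051118024547976199126685279597359409/211758236813575084767080625169910490512847900390625 : ℝ)) = ((583/625 : ℝ))^18 := by norm_num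
            _ ≤ x^18 := pow_le_pow_left₀ (by norm_num) (by linarith) 18
        linarith
      · rcases le_or_gt x (584/625 : ℝ) with hc4 | hc4
        · have b2 : x^2 ≤ (341056/390625 : ℝ) := by
            calc x^2 ≤ ((584/625 : ℝ))^2 := pow_le_pow_left₀ (by linarith) (by linarith) 2
              _ = (341056/390625 : ℝ) := by norm_num
          have b4 : (1854741648321/2441406250000 : ℝ) ≤ x^4 := by
            calc ((1854741648321/2441406250000 : ℝ)) = ((1167/1250 : ℝ))^4 := by norm_num
              _ ≤ x^4 := pow_le_pow_left₀ (by norm_num) (by linarith) 4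
          have b6 : x^6 ≤ (39671359416303616/59604644775390625 : ℝ) := by
            calc x^6 ≤ ((584/625 : ℝ))^6 := pow_le_pow_left₀ (by linarith) (by linarith) 6
              _ = (39671359416303616/59604644775390625 : ℝ) := by norm_num
          have b8 : (3440066582016500042119041/5960464477539062500000000 : ℝ) ≤ x^8 := by
            calc ((3440066582016500042119041/5960464477539062500000000 : ℝ)) = ((1167/1250 : ℝ))^8 := by norm_num
              _ ≤ x^8 := pow_le_pow_left₀ (by norm_num) (by linarith) 8
          have b10 : x^10 ≤ (4614540597255411369326411776/9094947017729282379150390625 : ℝ) := by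
            calc x^10 ≤ ((584/625 : ℝ))^10 := pow_le_pow_left₀ (by linarith) (by linarith) 10
              _ = (4614540597255411369326411776/9094947017729282379150390625 : ℝ) := by norm_num
          have b12 : (6380434762663271824139236030039780161/14551915228366851806640625000000000000 : ℝ) ≤ x^12 := by
            calc ((6380434762663271824139236030039780161/14551915228366851806640625000000000000 : ℝ)) = ((1167/1250 : ℝ))^12 := by norm_num
              _ ≤ x^12 := pow_le_pow_left₀ (by norm_num) (by linarith) 12
          have b14 : x^14 ≤ (536759648195146181100631856251232321536/1387778780781445675529539585113525390625 : ℝ) := by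
            calc x^14 ≤ ((584/625 : ℝ))^14 := pow_le_pow_left₀ (by linarith) (by linarith) 14
              _ = (536759648195146181100631856251232321536/1387778780781445675529539585113525390625 : ℝ) := by norm_num
          have b16 : (11834058088706685210990883071365654127013614759681/35527136788005009293556213378906250000000000000000 : ℝ) ≤ x^16 := by
            calc ((11834058088706685210990883071365654127013614759681/35527136788005009293556213378906250000000000000000 : ℝ)) = ((1167/1250 : ℝ))^16 := by norm_num
              _ ≤ x^16 := pow_le_pow_left₀ (by norm_num) (by linarith) 16
          have b18 : (16116673536370658815311162755179099333384444791447197409/55511151231257827021181583404541015625000000000000000000 : ℝ) ≤ x^18 := by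
            calc ((16116673536370658815311162755179099333384444791447197409/55511151231257827021181583404541015625000000000000000000 : ℝ)) = ((1167/1250 : ℝ))^18 := by norm_num
              _ ≤ x^18 := pow_le_pow_left₀ (by norm_num) (by linarith) 18
          linarith
        · have b2 : x^2 ≤ (1366561/1562500 : ℝ) := by
            calc x^2 ≤ ((1169/1250 : ℝ))^2 := pow_le_pow_left₀ (by linarith) (by linarith) 2
              _ = (1366561/1562500 : ℝ) := by norm_num
          have b4 : (116319195136/152587890625 : ℝ) ≤ x^4 := by
            calc ((116319195136/152587890625 : ℝ)) = ((584/625 : ℝ))^4 := by norm_num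
              _ ≤ x^4 := pow_le_pow_left₀ (by norm_num) (by linarith) 4
          have b6 : x^6 ≤ (2552037589851216481/3814697265625000000 : ℝ) := by
            calc x^6 ≤ ((1169/1250 : ℝ))^6 := pow_le_pow_left₀ (by linarith) (by linarith) 6
              _ = (2552037589851216481/3814697265625000000 : ℝ) := by norm_num
          have b8 : (13530155157086846058496/23283064365386962890625 : ℝ) ≤ x^8 := by
            calc ((13530155157086846058496/23283064365386962890625 : ℝ)) = ((584/625 : ℝ))^8 := by norm_num
              _ ≤ x^8 := pow_le_pow_left₀ (by norm_num) (by linarith) 8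
          have b10 : x^10 ≤ (4765902041704399462227575728801/9313225746154785156250000000000 : ℝ) := by
            calc x^10 ≤ ((1169/1250 : ℝ))^10 := pow_le_pow_left₀ (by linarith) (by linarith) 10
              _ = (4765902041704399462227575728801/9313225746154785156250000000000 : ℝ) := by norm_num
          have b12 : (1573816757937541579976988694675456/3552713678800500929355621337890625 : ℝ) ≤ x^12 := by
            calc ((1573816757937541579976988694675456/3552713678800500929355621337890625 : ℝ)) = ((584/625 : ℝ))^12 := by norm_num
              _ ≤ x^12 := pow_le_pow_left₀ (by norm_num) (by linarith) 12
          have b14 : x^14 ≤ (8900269479356053201435203466731358010231521/22737367544323205947875976562500000000000000 : ℝ) := by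
            calc x^14 ≤ ((1169/1250 : ℝ))^14 := pow_le_pow_left₀ (by linarith) (by linarith) 14
              _ = (8900269479356053201435203466731358010231521/22737367544323205947875976562500000000000000 : ℝ) := by norm_num
          have b16 : (183065098574843775941457098365620290653782016/542101086242752217003726400434970855712890625 : ℝ) ≤ x^16 := by
            calc ((183065098574843775941457098365620290653782016/542101086242752217003726400434970855712890625 : ℝ)) = ((584/625 : ℝ))^16 := by norm_num
              _ ≤ x^16 := pow_le_pow_left₀ (by norm_num) (by linarith) 16
          have b18 : (62435450259541918847489592140184993849216279248896/211758236813575084767080625169910490512847900390625 : ℝ) ≤ x^18 := by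
            calc ((62435450259541918847489592140184993849216279248896/211758236813575084767080625169910490512847900390625 : ℝ)) = ((584/625 : ℝ))^18 := by norm_num
              _ ≤ x^18 := pow_le_pow_left₀ (by norm_num) (by linarith) 18
          linarith
  · rcases le_or_gt x (47/50 : ℝ) with hc8 | hc8
    · rcases le_or_gt x (1171/1250 : ℝ) with hc6 | hc6
      · have b2 : x^2 ≤ (1371241/1562500 : ℝ) := by
          calc x^2 ≤ ((1171/1250 : ℝ))^2 := pow_le_pow_left₀ (by linarith) (by linarith) 2
            _ = (1371241/1562500 : ℝ) := by norm_num
        have b4 : (1867488966721/2441406250000 : ℝ) ≤ x^4 := by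
          calc ((1867488966721/2441406250000 : ℝ)) = ((1169/1250 : ℝ))^4 := by norm_num
            _ ≤ x^4 := pow_le_pow_left₀ (by norm_num) (by linarith) 4
        have b6 : x^6 ≤ (2578347030344150521/3814697265625000000 : ℝ) := by
          calc x^6 ≤ ((1171/1250 : ℝ))^6 := pow_le_pow_left₀ (by linarith) (by linarith) 6
            _ = (2578347030344150521/3814697265625000000 : ℝ) := by norm_num
        have b8 : (3487515040824668245491841/5960464477539062500000000 : ℝ) ≤ x^8 := by
          calc ((3487515040824668245491841/5960464477539062500000000 : ℝ)) = ((1169/1250 : ℝ))^8 := by norm_num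
            _ ≤ x^8 := pow_le_pow_left₀ (by norm_num) (by linarith) 8
        have b10 : x^10 ≤ (4848070768657369381097155672201/9313225746154785156250000000000 : ℝ) := by
          calc x^10 ≤ ((1171/1250 : ℝ))^10 := pow_le_pow_left₀ (by linarith) (by linarith) 10
            _ = (4848070768657369381097155672201/9313225746154785156250000000000 : ℝ) := by norm_num
        have b12 : (6512895860013605833501178115526023361/14551915228366851806640625000000000000 : ℝ) ≤ x^12 := by
          calc ((6512895860013605833501178115526023361/14551915228366851806640625000000000000 : ℝ)) = ((1169/1250 : ℝ))^12 := by norm_num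
            _ ≤ x^12 := pow_le_pow_left₀ (by norm_num) (by linarith) 12
        have b14 : x^14 ≤ (9115836581072190455392665192961073647328281/22737367544323205947875976562500000000000000 : ℝ) := by
          calc x^14 ≤ ((1171/1250 : ℝ))^14 := pow_le_pow_left₀ (by linarith) (by linarith) 14
            _ = (9115836581072190455392665192961073647328281/22737367544323205947875976562500000000000000 : ℝ) := by norm_num
        have b16 : (12162761159978287419006493084699871333819997569281/35527136788005009293556213378906250000000000000000 : ℝ) ≤ x^16 := by
          calc ((12162761159978287419006493084699871333819997569281/35527136788005009293556213378906250000000000000000 : ℝ)) = ((1169/1250 : ℝ))^16 := by norm_num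
            _ ≤ x^16 := pow_le_pow_left₀ (by norm_num) (by linarith) 16
        have b18 : (16621155053541088433604932196320540869816389698274212641/55511151231257827021181583404541015625000000000000000000 : ℝ) ≤ x^18 := by
          calc ((16621155053541088433604932196320540869816389698274212641/55511151231257827021181583404541015625000000000000000000 : ℝ)) = ((1169/1250 : ℝ))^18 := by norm_num
            _ ≤ x^18 := pow_le_pow_left₀ (by norm_num) (by linarith) 18
        linarith
      · rcases le_or_gt x (1173/1250 : ℝ) with hc7 | hc7
        · have b2 : x^2 ≤ (1375929/1562500 : ℝ) := by
            calc x^2 ≤ ((1173/1250 : ℝ))^2 := pow_le_pow_left₀ (by linarith) (by linarith) 2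
              _ = (1375929/1562500 : ℝ) := by norm_num
          have b4 : (1880301880081/2441406250000 : ℝ) ≤ x^4 := by
            calc ((1880301880081/2441406250000 : ℝ)) = ((1171/1250 : ℝ))^4 := by norm_num
              _ ≤ x^4 := pow_le_pow_left₀ (by norm_num) (by linarith) 4
          have b6 : x^6 ≤ (2604882107720890089/3814697265625000000 : ℝ) := by
            calc x^6 ≤ ((1173/1250 : ℝ))^6 := pow_le_pow_left₀ (by linarith) (by linarith) 6
              _ = (2604882107720890089/3814697265625000000 : ℝ) := by norm_num
          have b8 : (3535535160236143304566561/5960464477539062500000000 : ℝ) ≤ x^8 := by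
            calc ((3535535160236143304566561/5960464477539062500000000 : ℝ)) = ((1171/1250 : ℝ))^8 := by norm_num
              _ ≤ x^8 := pow_le_pow_left₀ (by norm_num) (by linarith) 8
          have b10 : x^10 ≤ (4931512305594566898015201050649/9313225746154785156250000000000 : ℝ) := by
            calc x^10 ≤ ((1173/1250 : ℝ))^10 := pow_le_pow_left₀ (by linarith) (by linarith) 10
              _ = (4931512305594566898015201050649/9313225746154785156250000000000 : ℝ) := by norm_num
          have b12 : (6647873408884499847505044841104571441/14551915228366851806640625000000000000 : ℝ) ≤ x^12 := by
            calc ((6647873408884499847505044841104571441/14551915228366851806640625000000000000 : ℝ)) = ((1171/1250 : ℝ))^12 := by norm_num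
              _ ≤ x^12 := pow_le_pow_left₀ (by norm_num) (by linarith) 12
          have b14 : x^14 ≤ (9336243489924757493983304051204541110913609/22737367544323205947875976562500000000000000 : ℝ) := by
            calc x^14 ≤ ((1173/1250 : ℝ))^14 := pow_le_pow_left₀ (by linarith) (by linarith) 14
              _ = (9336243489924757493983304051204541110913609/22737367544323205947875976562500000000000000 : ℝ) := by norm_num
          have b16 : (12500008869266011512243093611861135589236079366721/35527136788005009293556213378906250000000000000000 : ℝ) ≤ x^16 := by
            calc ((12500008869266011512243093611861135589236079366721/35527136788005009293556213378906250000000000000000 : ℝ)) = ((1171/1250 : ℝ))^16 := by norm_num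
              _ ≤ x^16 := pow_le_pow_left₀ (by norm_num) (by linarith) 16
          have b18 : (17140524661901194892059731927422075426519670706901870761/55511151231257827021181583404541015625000000000000000000 : ℝ) ≤ x^18 := by
            calc ((17140524661901194892059731927422075426519670706901870761/55511151231257827021181583404541015625000000000000000000 : ℝ)) = ((1171/1250 : ℝ))^18 := by norm_num
              _ ≤ x^18 := pow_le_pow_left₀ (by norm_num) (by linarith) 18
          linarith
        · have b2 : x^2 ≤ (2209/2500 : ℝ) := by
            calc x^2 ≤ ((47/50 : ℝ))^2 := pow_le_pow_left₀ (by linarith) (by linarith) 2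
              _ = (2209/2500 : ℝ) := by norm_num
          have b4 : (1893180613041/2441406250000 : ℝ) ≤ x^4 := by
            calc ((1893180613041/2441406250000 : ℝ)) = ((1173/1250 : ℝ))^4 := by norm_num
              _ ≤ x^4 := pow_le_pow_left₀ (by norm_num) (by linarith) 4
          have b6 : x^6 ≤ (10779215329/15625000000 : ℝ) := by
            calc x^6 ≤ ((47/50 : ℝ))^6 := pow_le_pow_left₀ (by linarith) (by linarith) 6
              _ = (10779215329/15625000000 : ℝ) := by norm_num
          have b8 : (3584132833594296579267681/5960464477539062500000000 : ℝ) ≤ x^8 := by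
            calc ((3584132833594296579267681/5960464477539062500000000 : ℝ)) = ((1173/1250 : ℝ))^8 := by norm_num
              _ ≤ x^8 := pow_le_pow_left₀ (by norm_num) (by linarith) 8
          have b10 : x^10 ≤ (52599132235830049/97656250000000000 : ℝ) := by
            calc x^10 ≤ ((47/50 : ℝ))^10 := pow_le_pow_left₀ (by linarith) (by linarith) 10
              _ = (52599132235830049/97656250000000000 : ℝ) := by norm_num
          have b12 : (6785410795124426837419157566418427921/14551915228366851806640625000000000000 : ℝ) ≤ x^12 := by
            calc ((6785410795124426837419157566418427921/14551915228366851806640625000000000000 : ℝ)) = ((1173/1250 : ℝ))^12 := by norm_num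
              _ ≤ x^12 := pow_le_pow_left₀ (by norm_num) (by linarith) 12
          have b14 : x^14 ≤ (256666986187667409334369/610351562500000000000000 : ℝ) := by
            calc x^14 ≤ ((47/50 : ℝ))^14 := pow_le_pow_left₀ (by linarith) (by linarith) 14
              _ = (256666986187667409334369/610351562500000000000000 : ℝ) := by norm_num
          have b16 : (12846008168848681653938953559869813046198251117761/35527136788005009293556213378906250000000000000000 : ℝ) ≤ x^16 := by
            calc ((12846008168848681653938953559869813046198251117761/35527136788005009293556213378906250000000000000000 : ℝ)) = ((1173/1250 : ℝ))^16 := by norm_num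
              _ ≤ x^16 := pow_le_pow_left₀ (by norm_num) (by linarith) 16
          have b18 : (17675195173755797699422570432678111994842513462209774969/55511151231257827021181583404541015625000000000000000000 : ℝ) ≤ x^18 := by
            calc ((17675195173755797699422570432678111994842513462209774969/55511151231257827021181583404541015625000000000000000000 : ℝ)) = ((1173/1250 : ℝ))^18 := by norm_num
              _ ≤ x^18 := pow_le_pow_left₀ (by norm_num) (by linarith) 18
          linarith
    · rcases le_or_gt x (1179/1250 : ℝ) with hc9 | hc9
      · have b2 : x^2 ≤ (1390041/1562500 : ℝ) := by
          calc x^2 ≤ ((1179/1250 : ℝ))^2 := pow_le_pow_left₀ (by linarith) (by linarith) 2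
            _ = (1390041/1562500 : ℝ) := by norm_num
        have b4 : (4879681/6250000 : ℝ) ≤ x^4 := by
          calc ((4879681/6250000 : ℝ)) = ((47/50 : ℝ))^4 := by norm_num
            _ ≤ x^4 := pow_le_pow_left₀ (by norm_num) (by linarith) 4
        have b6 : x^6 ≤ (2685856655309838921/3814697265625000000 : ℝ) := by
          calc x^6 ≤ ((1179/1250 : ℝ))^6 := pow_le_pow_left₀ (by linarith) (by linarith) 6
            _ = (2685856655309838921/3814697265625000000 : ℝ) := by norm_num
        have b8 : (23811286661761/39062500000000 : ℝ) ≤ x^8 := by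
          calc ((23811286661761/39062500000000 : ℝ)) = ((47/50 : ℝ))^8 := by norm_num
            _ ≤ x^8 := pow_le_pow_left₀ (by norm_num) (by linarith) 8
        have b10 : x^10 ≤ (5189649782180637032280154806201/9313225746154785156250000000000 : ℝ) := by
          calc x^10 ≤ ((1179/1250 : ℝ))^10 := pow_le_pow_left₀ (by linarith) (by linarith) 10
            _ = (5189649782180637032280154806201/9313225746154785156250000000000 : ℝ) := by norm_num
        have b12 : (116191483108948578241/244140625000000000000 : ℝ) ≤ x^12 := by
          calc ((116191483108948578241/244140625000000000000 : ℝ)) = ((47/50 : ℝ))^12 := by norm_num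
            _ ≤ x^12 := pow_le_pow_left₀ (by norm_num) (by linarith) 12
        have b14 : x^14 ≤ (10027513869157183042923077244368703119203881/22737367544323205947875976562500000000000000 : ℝ) := by
          calc x^14 ≤ ((1179/1250 : ℝ))^14 := pow_le_pow_left₀ (by linarith) (by linarith) 14
            _ = (10027513869157183042923077244368703119203881/22737367544323205947875976562500000000000000 : ℝ) := by norm_num
        have b16 : (566977372488557307219621121/1525878906250000000000000000 : ℝ) ≤ x^16 := by
          calc ((566977372488557307219621121/1525878906250000000000000000 : ℝ)) = ((47/50 : ℝ))^16 := by norm_num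
            _ ≤ x^16 := pow_le_pow_left₀ (by norm_num) (by linarith) 16
        have b18 : (1252453015827223091648143056289/3814697265625000000000000000000 : ℝ) ≤ x^18 := by
          calc ((1252453015827223091648143056289/3814697265625000000000000000000 : ℝ)) = ((47/50 : ℝ))^18 := by norm_num
            _ ≤ x^18 := pow_le_pow_left₀ (by norm_num) (by linarith) 18
        linarith
      · rcases le_or_gt x (1183/1250 : ℝ) with hc10 | hc10
        · have b2 : x^2 ≤ (1399489/1562500 : ℝ) := by
            calc x^2 ≤ ((1183/1250 : ℝ))^2 := pow_le_pow_left₀ (by linarith) (by linarith) 2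
              _ = (1399489/1562500 : ℝ) := by norm_num
          have b4 : (1932213981681/2441406250000 : ℝ) ≤ x^4 := by
            calc ((1932213981681/2441406250000 : ℝ)) = ((1179/1250 : ℝ))^4 := by norm_num
              _ ≤ x^4 := pow_le_pow_left₀ (by norm_num) (by linarith) 4
          have b6 : x^6 ≤ (2740996416574767169/3814697265625000000 : ℝ) := by
            calc x^6 ≤ ((1183/1250 : ℝ))^6 := pow_le_pow_left₀ (by linarith) (by linarith) 6
              _ = (2740996416574767169/3814697265625000000 : ℝ) := by norm_num
          have b8 : (3733450871003543803585761/5960464477539062500000000 : ℝ) ≤ x^8 := by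
            calc ((3733450871003543803585761/5960464477539062500000000 : ℝ)) = ((1179/1250 : ℝ))^8 := by norm_num
              _ ≤ x^8 := pow_le_pow_left₀ (by norm_num) (by linarith) 8
          have b10 : x^10 ≤ (5368431874545433766794372736449/9313225746154785156250000000000 : ℝ) := by
            calc x^10 ≤ ((1183/1250 : ℝ))^10 := pow_le_pow_left₀ (by linarith) (by linarith) 10
              _ = (5368431874545433766794372736449/9313225746154785156250000000000 : ℝ) := by norm_num
          have b12 : (7213825972872154880987738666966444241/14551915228366851806640625000000000000 : ℝ) ≤ x^12 := by
            calc ((7213825972872154880987738666966444241/14551915228366851806640625000000000000 : ℝ)) = ((1179/1250 : ℝ))^12 := by norm_num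
              _ ≤ x^12 := pow_le_pow_left₀ (by norm_num) (by linarith) 12
          have b14 : x^14 ≤ (10514446723593250089461651794042132085099329/22737367544323205947875976562500000000000000 : ℝ) := by
            calc x^14 ≤ ((1183/1250 : ℝ))^14 := pow_le_pow_left₀ (by linarith) (by linarith) 14
              _ = (10514446723593250089461651794042132085099329/22737367544323205947875976562500000000000000 : ℝ) := by norm_num
          have b16 : (13938655406197119874167837215839516452521281949121/35527136788005009293556213378906250000000000000000 : ℝ) ≤ x^16 := by
            calc ((13938655406197119874167837215839516452521281949121/35527136788005009293556213378906250000000000000000 : ℝ)) = ((1179/1250 : ℝ))^16 := by norm_num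
              _ ≤ x^16 := pow_le_pow_left₀ (by norm_num) (by linarith) 16
          have b18 : (19375302499485650707008134611342777289179135281838103961/55511151231257827021181583404541015625000000000000000000 : ℝ) ≤ x^18 := by
            calc ((19375302499485650707008134611342777289179135281838103961/55511151231257827021181583404541015625000000000000000000 : ℝ)) = ((1179/1250 : ℝ))^18 := by norm_num
              _ ≤ x^18 := pow_le_pow_left₀ (by norm_num) (by linarith) 18
          linarith
        · have b2 : x^2 ≤ (361/400 : ℝ) := by
            calc x^2 ≤ ((19/20 : ℝ))^2 := pow_le_pow_left₀ (by linarith) (by linarith) 2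
              _ = (361/400 : ℝ) := by norm_num
          have b4 : (1958569461121/2441406250000 : ℝ) ≤ x^4 := by
            calc ((1958569461121/2441406250000 : ℝ)) = ((1183/1250 : ℝ))^4 := by norm_num
              _ ≤ x^4 := pow_le_pow_left₀ (by norm_num) (by linarith) 4
          have b6 : x^6 ≤ (47045881/64000000 : ℝ) := by
            calc x^6 ≤ ((19/20 : ℝ))^6 := pow_le_pow_left₀ (by linarith) (by linarith) 6
              _ = (47045881/64000000 : ℝ) := by norm_num
          have b8 : (3835994334035804330576641/5960464477539062500000000 : ℝ) ≤ x^8 := by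
            calc ((3835994334035804330576641/5960464477539062500000000 : ℝ)) = ((1183/1250 : ℝ))^8 := by norm_num
              _ ≤ x^8 := pow_le_pow_left₀ (by norm_num) (by linarith) 8
          have b10 : x^10 ≤ (6131066257801/10240000000000 : ℝ) := by
            calc x^10 ≤ ((19/20 : ℝ))^10 := pow_le_pow_left₀ (by linarith) (by linarith) 10
              _ = (6131066257801/10240000000000 : ℝ) := by norm_num
          have b12 : (7513061355675714556857289906560274561/14551915228366851806640625000000000000 : ℝ) ≤ x^12 := by
            calc ((7513061355675714556857289906560274561/14551915228366851806640625000000000000 : ℝ)) = ((1183/1250 : ℝ))^12 := by norm_num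
              _ ≤ x^12 := pow_le_pow_left₀ (by norm_num) (by linarith) 12
          have b14 : x^14 ≤ (799006685782884121/1638400000000000000 : ℝ) := by
            calc x^14 ≤ ((19/20 : ℝ))^14 := pow_le_pow_left₀ (by linarith) (by linarith) 14
              _ = (799006685782884121/1638400000000000000 : ℝ) := by norm_num
          have b16 : (14714852530754793974450597607592229389643574842881/35527136788005009293556213378906250000000000000000 : ℝ) ≤ x^16 := by
            calc ((14714852530754793974450597607592229389643574842881/35527136788005009293556213378906250000000000000000 : ℝ)) = ((1183/1250 : ℝ))^16 := by norm_num
              _ ≤ x^16 := pow_le_pow_left₀ (by norm_num) (by linarith) 16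
          have b18 : (20593274253413495864509892395251641516282896913288687809/55511151231257827021181583404541015625000000000000000000 : ℝ) ≤ x^18 := by
            calc ((20593274253413495864509892395251641516282896913288687809/55511151231257827021181583404541015625000000000000000000 : ℝ)) = ((1183/1250 : ℝ))^18 := by norm_num
              _ ≤ x^18 := pow_le_pow_left₀ (by norm_num) (by linarith) 18
          linarith

set_option maxHeartbeats 1000000 in
lemma regionGhi (x : ℝ) (h1 : (19/20 : ℝ) ≤ x) (h2 : x ≤ (29/25 : ℝ)) :
    (3 : ℝ) * x^2 + ((-13 : ℝ)/3) * x^4 + ((77 : ℝ)/72) * x^6 + ((-1 : ℝ)/16) * x^8 + ((-1 : ℝ)/576) * x^10 < 0 := by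
  rcases le_or_gt x (2487/2500 : ℝ) with hc5 | hc5
  · rcases le_or_gt x (2407/2500 : ℝ) with hc2 | hc2
    · rcases le_or_gt x (2391/2500 : ℝ) with hc1 | hc1
      · have b2 : x^2 ≤ (5716881/6250000 : ℝ) := by
          calc x^2 ≤ ((2391/2500 : ℝ))^2 := pow_le_pow_left₀ (by linarith) (by linarith) 2
            _ = (5716881/6250000 : ℝ) := by norm_num
        have b4 : (130321/160000 : ℝ) ≤ x^4 := by
          calc ((130321/160000 : ℝ)) = ((19/20 : ℝ))^4 := by norm_num
            _ ≤ x^4 := pow_le_pow_left₀ (by norm_num) (by linarith) 4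
        have b6 : x^6 ≤ (186843268836100625841/244140625000000000000 : ℝ) := by
          calc x^6 ≤ ((2391/2500 : ℝ))^6 := pow_le_pow_left₀ (by linarith) (by linarith) 6
            _ = (186843268836100625841/244140625000000000000 : ℝ) := by norm_num
        have b8 : (16983563041/25600000000 : ℝ) ≤ x^8 := by
          calc ((16983563041/25600000000 : ℝ)) = ((19/20 : ℝ))^8 := by norm_num
            _ ≤ x^8 := pow_le_pow_left₀ (by norm_num) (by linarith) 8
        have b10 : (6131066257801/10240000000000 : ℝ) ≤ x^10 := by
          calc ((6131066257801/10240000000000 : ℝ)) = ((19/20 : ℝ))^10 := by norm_num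
            _ ≤ x^10 := pow_le_pow_left₀ (by norm_num) (by linarith) 10
        linarith
      · have b2 : x^2 ≤ (5793649/6250000 : ℝ) := by
          calc x^2 ≤ ((2407/2500 : ℝ))^2 := pow_le_pow_left₀ (by linarith) (by linarith) 2
            _ = (5793649/6250000 : ℝ) := by norm_num
        have b4 : (32682728368161/39062500000000 : ℝ) ≤ x^4 := by
          calc ((32682728368161/39062500000000 : ℝ)) = ((2391/2500 : ℝ))^4 := by norm_num
            _ ≤ x^4 := pow_le_pow_left₀ (by norm_num) (by linarith) 4
        have b6 : x^6 ≤ (194471758656328538449/244140625000000000000 : ℝ) := by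
          calc x^6 ≤ ((2407/2500 : ℝ))^6 := pow_le_pow_left₀ (by linarith) (by linarith) 6
            _ = (194471758656328538449/244140625000000000000 : ℝ) := by norm_num
        have b8 : (1068160733586995781958521921/1525878906250000000000000000 : ℝ) ≤ x^8 := by
          calc ((1068160733586995781958521921/1525878906250000000000000000 : ℝ)) = ((2391/2500 : ℝ))^8 := by norm_num
            _ ≤ x^8 := pow_le_pow_left₀ (by norm_num) (by linarith) 8
        have b10 : (6106547802789558032958816758248401/9536743164062500000000000000000000 : ℝ) ≤ x^10 := by
          calc ((6106547802789558032958816758248401/9536743164062500000000000000000000 : ℝ)) = ((2391/2500 : ℝ))^10 := by norm_num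
            _ ≤ x^10 := pow_le_pow_left₀ (by norm_num) (by linarith) 10
        linarith
    · rcases le_or_gt x (2423/2500 : ℝ) with hc3 | hc3
      · have b2 : x^2 ≤ (5870929/6250000 : ℝ) := by
          calc x^2 ≤ ((2423/2500 : ℝ))^2 := pow_le_pow_left₀ (by linarith) (by linarith) 2
            _ = (5870929/6250000 : ℝ) := by norm_num
        have b4 : (33566368735201/39062500000000 : ℝ) ≤ x^4 := by
          calc ((33566368735201/39062500000000 : ℝ)) = ((2407/2500 : ℝ))^4 := by norm_num
            _ ≤ x^4 := pow_le_pow_left₀ (by norm_num) (by linarith) 4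
        have b6 : x^6 ≤ (202358049579253775089/244140625000000000000 : ℝ) := by
          calc x^6 ≤ ((2423/2500 : ℝ))^6 := pow_le_pow_left₀ (by linarith) (by linarith) 6
            _ = (202358049579253775089/244140625000000000000 : ℝ) := by norm_num
        have b8 : (1126701110067479180456510401/1525878906250000000000000000 : ℝ) ≤ x^8 := by
          calc ((1126701110067479180456510401/1525878906250000000000000000 : ℝ)) = ((2407/2500 : ℝ))^8 := by norm_num
            _ ≤ x^8 := pow_le_pow_left₀ (by norm_num) (by linarith) 8
        have b10 : (6527710759641340686372681028243249/9536743164062500000000000000000000 : ℝ) ≤ x^10 := by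
          calc ((6527710759641340686372681028243249/9536743164062500000000000000000000 : ℝ)) = ((2407/2500 : ℝ))^10 := by norm_num
            _ ≤ x^10 := pow_le_pow_left₀ (by norm_num) (by linarith) 10
        linarith
      · rcases le_or_gt x (491/500 : ℝ) with hc4 | hc4
        · have b2 : x^2 ≤ (241081/250000 : ℝ) := by
            calc x^2 ≤ ((491/500 : ℝ))^2 := pow_le_pow_left₀ (by linarith) (by linarith) 2
              _ = (241081/250000 : ℝ) := by norm_num
          have b4 : (34467807323041/39062500000000 : ℝ) ≤ x^4 := by
            calc ((34467807323041/39062500000000 : ℝ)) = ((2423/2500 : ℝ))^4 := by norm_num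
              _ ≤ x^4 := pow_le_pow_left₀ (by norm_num) (by linarith) 4
          have b6 : x^6 ≤ (14011639427134441/15625000000000000 : ℝ) := by
            calc x^6 ≤ ((491/500 : ℝ))^6 := pow_le_pow_left₀ (by linarith) (by linarith) 6
              _ = (14011639427134441/15625000000000000 : ℝ) := by norm_num
          have b8 : (1188029741658278786529487681/1525878906250000000000000000 : ℝ) ≤ x^8 := by
            calc ((1188029741658278786529487681/1525878906250000000000000000 : ℝ)) = ((2423/2500 : ℝ))^8 := by norm_num
              _ ≤ x^8 := pow_le_pow_left₀ (by norm_num) (by linarith) 8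
          have b10 : (6974838263164097017920778581525649/9536743164062500000000000000000000 : ℝ) ≤ x^10 := by
            calc ((6974838263164097017920778581525649/9536743164062500000000000000000000 : ℝ)) = ((2423/2500 : ℝ))^10 := by norm_num
              _ ≤ x^10 := pow_le_pow_left₀ (by norm_num) (by linarith) 10
          linarith
        · have b2 : x^2 ≤ (6185169/6250000 : ℝ) := by
            calc x^2 ≤ ((2487/2500 : ℝ))^2 := pow_le_pow_left₀ (by linarith) (by linarith) 2
              _ = (6185169/6250000 : ℝ) := by norm_num
          have b4 : (58120048561/62500000000 : ℝ) ≤ x^4 := by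
            calc ((58120048561/62500000000 : ℝ)) = ((491/500 : ℝ))^4 := by norm_num
              _ ≤ x^4 := pow_le_pow_left₀ (by norm_num) (by linarith) 4
          have b6 : x^6 ≤ (236621777047029181809/244140625000000000000 : ℝ) := by
            calc x^6 ≤ ((2487/2500 : ℝ))^6 := pow_le_pow_left₀ (by linarith) (by linarith) 6
              _ = (236621777047029181809/244140625000000000000 : ℝ) := by norm_num
          have b8 : (3377940044732998170721/3906250000000000000000 : ℝ) ≤ x^8 := by
            calc ((3377940044732998170721/3906250000000000000000 : ℝ)) = ((491/500 : ℝ))^8 := by norm_num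
              _ ≤ x^8 := pow_le_pow_left₀ (by norm_num) (by linarith) 8
          have b10 : (814357163924275931995589401/976562500000000000000000000 : ℝ) ≤ x^10 := by
            calc ((814357163924275931995589401/976562500000000000000000000 : ℝ)) = ((491/500 : ℝ))^10 := by norm_num
              _ ≤ x^10 := pow_le_pow_left₀ (by norm_num) (by linarith) 10
          linarith
  · rcases le_or_gt x (2647/2500 : ℝ) with hc8 | hc8
    · rcases le_or_gt x (2519/2500 : ℝ) with hc6 | hc6
      · have b2 : x^2 ≤ (6345361/6250000 : ℝ) := by
          calc x^2 ≤ ((2519/2500 : ℝ))^2 := pow_le_pow_left₀ (by linarith) (by linarith) 2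
            _ = (6345361/6250000 : ℝ) := by norm_num
        have b4 : (38256315558561/39062500000000 : ℝ) ≤ x^4 := by
          calc ((38256315558561/39062500000000 : ℝ)) = ((2487/2500 : ℝ))^4 := by norm_num
            _ ≤ x^4 := pow_le_pow_left₀ (by norm_num) (by linarith) 4
        have b6 : x^6 ≤ (255487116629782280881/244140625000000000000 : ℝ) := by
          calc x^6 ≤ ((2519/2500 : ℝ))^6 := pow_le_pow_left₀ (by linarith) (by linarith) 6
            _ = (255487116629782280881/244140625000000000000 : ℝ) := by norm_num
        have b8 : (1463545680116196437420390721/1525878906250000000000000000 : ℝ) ≤ x^8 := by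
          calc ((1463545680116196437420390721/1525878906250000000000000000 : ℝ)) = ((2487/2500 : ℝ))^8 := by norm_num
            _ ≤ x^8 := pow_le_pow_left₀ (by norm_num) (by linarith) 8
        have b10 : (9052277370738614602643040655416849/9536743164062500000000000000000000 : ℝ) ≤ x^10 := by
          calc ((9052277370738614602643040655416849/9536743164062500000000000000000000 : ℝ)) = ((2487/2500 : ℝ))^10 := by norm_num
            _ ≤ x^10 := pow_le_pow_left₀ (by norm_num) (by linarith) 10
        linarith
      · rcases le_or_gt x (2583/2500 : ℝ) with hc7 | hc7
        · have b2 : x^2 ≤ (6671889/6250000 : ℝ) := by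
            calc x^2 ≤ ((2583/2500 : ℝ))^2 := pow_le_pow_left₀ (by linarith) (by linarith) 2
              _ = (6671889/6250000 : ℝ) := by norm_num
          have b4 : (40263606220321/39062500000000 : ℝ) ≤ x^4 := by
            calc ((40263606220321/39062500000000 : ℝ)) = ((2519/2500 : ℝ))^4 := by norm_num
              _ ≤ x^4 := pow_le_pow_left₀ (by norm_num) (by linarith) 4
          have b6 : x^6 ≤ (296993153005143768369/244140625000000000000 : ℝ) := by
            calc x^6 ≤ ((2583/2500 : ℝ))^6 := pow_le_pow_left₀ (by linarith) (by linarith) 6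
              _ = (296993153005143768369/244140625000000000000 : ℝ) := by norm_num
          have b8 : (1621157985865071923593343041/1525878906250000000000000000 : ℝ) ≤ x^8 := by
            calc ((1621157985865071923593343041/1525878906250000000000000000 : ℝ)) = ((2519/2500 : ℝ))^8 := by norm_num
              _ ≤ x^8 := pow_le_pow_left₀ (by norm_num) (by linarith) 8
          have b10 : (10286832658346778646164178791982801/9536743164062500000000000000000000 : ℝ) ≤ x^10 := by
            calc ((10286832658346778646164178791982801/9536743164062500000000000000000000 : ℝ)) = ((2519/2500 : ℝ))^10 := by norm_num
              _ ≤ x^10 := pow_le_pow_left₀ (by norm_num) (by linarith) 10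
          linarith
        · have b2 : x^2 ≤ (7006609/6250000 : ℝ) := by
            calc x^2 ≤ ((2647/2500 : ℝ))^2 := pow_le_pow_left₀ (by linarith) (by linarith) 2
              _ = (7006609/6250000 : ℝ) := by norm_num
          have b4 : (44514102828321/39062500000000 : ℝ) ≤ x^4 := by
            calc ((44514102828321/39062500000000 : ℝ)) = ((2583/2500 : ℝ))^4 := by norm_num
              _ ≤ x^4 := pow_le_pow_left₀ (by norm_num) (by linarith) 4
          have b6 : x^6 ≤ (343972440545174724529/244140625000000000000 : ℝ) := by
            calc x^6 ≤ ((2647/2500 : ℝ))^6 := pow_le_pow_left₀ (by linarith) (by linarith) 6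
              _ = (343972440545174724529/244140625000000000000 : ℝ) := by norm_num
          have b8 : (1981505350610335651599679041/1525878906250000000000000000 : ℝ) ≤ x^8 := by
            calc ((1981505350610335651599679041/1525878906250000000000000000 : ℝ)) = ((2583/2500 : ℝ))^8 := by norm_num
              _ ≤ x^8 := pow_le_pow_left₀ (by norm_num) (by linarith) 8
          have b10 : (13220383752178241720215730997178449/9536743164062500000000000000000000 : ℝ) ≤ x^10 := by
            calc ((13220383752178241720215730997178449/9536743164062500000000000000000000 : ℝ)) = ((2583/2500 : ℝ))^10 := by norm_num
              _ ≤ x^10 := pow_le_pow_left₀ (by norm_num) (by linarith) 10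
          linarith
    · rcases le_or_gt x (2711/2500 : ℝ) with hc9 | hc9
      · have b2 : x^2 ≤ (7349521/6250000 : ℝ) := by
          calc x^2 ≤ ((2711/2500 : ℝ))^2 := pow_le_pow_left₀ (by linarith) (by linarith) 2
            _ = (7349521/6250000 : ℝ) := by norm_num
        have b4 : (49092569678881/39062500000000 : ℝ) ≤ x^4 := by
          calc ((49092569678881/39062500000000 : ℝ)) = ((2647/2500 : ℝ))^4 := by norm_num
            _ ≤ x^4 := pow_le_pow_left₀ (by norm_num) (by linarith) 4
        have b6 : x^6 ≤ (396987749726564147761/244140625000000000000 : ℝ) := by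
          calc x^6 ≤ ((2711/2500 : ℝ))^6 := pow_le_pow_left₀ (by linarith) (by linarith) 6
            _ = (396987749726564147761/244140625000000000000 : ℝ) := by norm_num
        have b8 : (2410080397675786131457412161/1525878906250000000000000000 : ℝ) ≤ x^8 := by
          calc ((2410080397675786131457412161/1525878906250000000000000000 : ℝ)) = ((2647/2500 : ℝ))^8 := by norm_num
            _ ≤ x^8 := pow_le_pow_left₀ (by norm_num) (by linarith) 8
        have b10 : (16886491005078742190744687163972049/9536743164062500000000000000000000 : ℝ) ≤ x^10 := by
          calc ((16886491005078742190744687163972049/9536743164062500000000000000000000 : ℝ)) = ((2647/2500 : ℝ))^10 := by norm_num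
            _ ≤ x^10 := pow_le_pow_left₀ (by norm_num) (by linarith) 10
        linarith
      · rcases le_or_gt x (111/100 : ℝ) with hc10 | hc10
        · have b2 : x^2 ≤ (12321/10000 : ℝ) := by
            calc x^2 ≤ ((111/100 : ℝ))^2 := pow_le_pow_left₀ (by linarith) (by linarith) 2
              _ = (12321/10000 : ℝ) := by norm_num
          have b4 : (54015458929441/39062500000000 : ℝ) ≤ x^4 := by
            calc ((54015458929441/39062500000000 : ℝ)) = ((2711/2500 : ℝ))^4 := by norm_num
              _ ≤ x^4 := pow_le_pow_left₀ (by norm_num) (by linarith) 4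
          have b6 : x^6 ≤ (1870414552161/1000000000000 : ℝ) := by
            calc x^6 ≤ ((111/100 : ℝ))^6 := pow_le_pow_left₀ (by linarith) (by linarith) 6
              _ = (1870414552161/1000000000000 : ℝ) := by norm_num
          have b8 : (2917669803358127461816572481/1525878906250000000000000000 : ℝ) ≤ x^8 := by
            calc ((2917669803358127461816572481/1525878906250000000000000000 : ℝ)) = ((2711/2500 : ℝ))^8 := by norm_num
              _ ≤ x^8 := pow_le_pow_left₀ (by norm_num) (by linarith) 8
          have b10 : (21443475490846428301297597597131601/9536743164062500000000000000000000 : ℝ) ≤ x^10 := by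
            calc ((21443475490846428301297597597131601/9536743164062500000000000000000000 : ℝ)) = ((2711/2500 : ℝ))^10 := by norm_num
              _ ≤ x^10 := pow_le_pow_left₀ (by norm_num) (by linarith) 10
          linarith
        · have b2 : x^2 ≤ (841/625 : ℝ) := by
            calc x^2 ≤ ((29/25 : ℝ))^2 := pow_le_pow_left₀ (by linarith) (by linarith) 2
              _ = (841/625 : ℝ) := by norm_num
          have b4 : (151807041/100000000 : ℝ) ≤ x^4 := by
            calc ((151807041/100000000 : ℝ)) = ((111/100 : ℝ))^4 := by norm_num
              _ ≤ x^4 := pow_le_pow_left₀ (by norm_num) (by linarith) 4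
          have b6 : x^6 ≤ (594823321/244140625 : ℝ) := by
            calc x^6 ≤ ((29/25 : ℝ))^6 := pow_le_pow_left₀ (by linarith) (by linarith) 6
              _ = (594823321/244140625 : ℝ) := by norm_num
          have b8 : (23045377697175681/10000000000000000 : ℝ) ≤ x^8 := by
            calc ((23045377697175681/10000000000000000 : ℝ)) = ((111/100 : ℝ))^8 := by norm_num
              _ ≤ x^8 := pow_le_pow_left₀ (by norm_num) (by linarith) 8
          have b10 : (283942098606901565601/100000000000000000000 : ℝ) ≤ x^10 := by
            calc ((283942098606901565601/100000000000000000000 : ℝ)) = ((111/100 : ℝ))^10 := by norm_num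
              _ ≤ x^10 := pow_le_pow_left₀ (by norm_num) (by linarith) 10
          linarith



set_option maxHeartbeats 2000000 in
lemma musLB (x c s : ℝ) (hx0 : 0 < x) (hle : x ≤ 1859/2000) (hsp : 0 < s) (hc_pos : 0 < c)
    (hq1 : x*c < s) (hF : s^2 + 3*x*c*s - x^2*c^2 - 3*x^2*s^2 = 0)
    (hsin_lt : s < x)
    (hcos2 : 1 - x^2/2 ≤ c)
    (hsin5 : s ≤ x - x^3/6 + x^5/120)
    (hcos6 : 1 - x^2/2 + x^4/24 - x^6/720 ≤ c)
    (hGlo : 89/100 < x → 0 < (3 : ℝ) * x^2 + ((-13 : ℝ)/3) * x^4 + ((10 : ℝ)/9) * x^6 + ((-31 : ℝ)/240) * x^8 + ((101 : ℝ)/14400) * x^10 + ((-11 : ℝ)/86400) * x^12 + ((-1 : ℝ)/518400) * x^14) :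
    False := by
  rcases le_or_gt x (89/100 : ℝ) with hcase | hcase
  · have hq0 : (1 - x^2/2) * s ≤ x * c := by nlinarith [hsin_lt, hcos2, hx0, hsp]
    have key2 : 0 ≤ (x*c - (1-x^2/2)*s) * (3*s - x*c - (1-x^2/2)*s) := by
      apply mul_nonneg (by linarith)
      nlinarith [hsp, hq0, hq1]
    have hpos : 0 < (1 + 3*(1-x^2/2) - (1-x^2/2)^2 - 3*x^2) * s^2 := by
      apply mul_pos _ (pow_pos hsp 2)
      have hx2 : x^2 ≤ (89/100 : ℝ)^2 := by nlinarith [hcase, hx0]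
      have hx4 : x^4 ≤ (89/100 : ℝ)^4 := by nlinarith [hx2, sq_nonneg x, sq_nonneg (x^2)]
      nlinarith [hx2, hx4]
    nlinarith [hF, key2, hpos]
  · have hS5pos : 0 < x - x^3/6 + x^5/120 := by nlinarith [hcase, hle]
    have t1 : x * (1 - x^2/2 + x^4/24 - x^6/720) * s ≤ x * c * s :=
      mul_le_mul_of_nonneg_right (mul_le_mul_of_nonneg_left hcos6 (le_of_lt hx0)) (le_of_lt hsp)
    have t2 : x * c * s ≤ x * c * (x - x^3/6 + x^5/120) :=
      mul_le_mul_of_nonneg_left hsin5 (le_of_lt (mul_pos hx0 hc_pos))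
    have key2 : 0 ≤ (x*c*(x - x^3/6 + x^5/120) - x*(1 - x^2/2 + x^4/24 - x^6/720)*s)
        * (3*s*(x - x^3/6 + x^5/120) - x*c*(x - x^3/6 + x^5/120)
           - x*(1 - x^2/2 + x^4/24 - x^6/720)*s) := by
      apply mul_nonneg (by linarith)
      have u1 : x*c*(x - x^3/6 + x^5/120) < s*(x - x^3/6 + x^5/120) :=
        mul_lt_mul_of_pos_right hq1 hS5pos
      nlinarith [u1, t1, t2, mul_pos hsp hS5pos]
    have h1 : 0 < ((3 : ℝ) * x^2 + ((-13 : ℝ)/3) * x^4 + ((10 : ℝ)/9) * x^6 + ((-31 : ℝ)/240) * x^8 + ((101 : ℝ)/14400) * x^10 + ((-11 : ℝ)/86400) * x^12 + ((-1 : ℝ)/518400) * x^14) * s^2 :=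
      mul_pos (hGlo hcase) (pow_pos hsp 2)
    have hid : ((3 : ℝ) * x^2 + ((-13 : ℝ)/3) * x^4 + ((10 : ℝ)/9) * x^6 + ((-31 : ℝ)/240) * x^8 + ((101 : ℝ)/14400) * x^10 + ((-11 : ℝ)/86400) * x^12 + ((-1 : ℝ)/518400) * x^14) * s^2
        = (s^2 + 3*x*c*s - x^2*c^2 - 3*x^2*s^2) * (x - x^3/6 + x^5/120)^2
          - (x*c*(x - x^3/6 + x^5/120) - x*(1 - x^2/2 + x^4/24 - x^6/720)*s)
            * (3*s*(x - x^3/6 + x^5/120) - x*c*(x - x^3/6 + x^5/120)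
               - x*(1 - x^2/2 + x^4/24 - x^6/720)*s) := by ring
    rw [hid, hF] at h1
    linarith [key2, h1]

set_option maxHeartbeats 2000000 in
lemma musUB (x c s : ℝ) (hx0 : 0 < x) (hge : 233/250 ≤ x) (hsp : 0 < s) (hc_pos : 0 < c)
    (hq1 : x*c < s) (hF : s^2 + 3*x*c*s - x^2*c^2 - 3*x^2*s^2 = 0)
    (hsin3 : x - x^3/6 ≤ s) (hcos4 : c ≤ 1 - x^2/2 + x^4/24)
    (hsin7 : x - x^3/6 + x^5/120 - x^7/5040 ≤ s)
    (hcos8 : c ≤ 1 - x^2/2 + x^4/24 - x^6/720 + x^8/40320)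
    (hGhi2 : x ≤ 19/20 → (3 : ℝ) * x^2 + ((-13 : ℝ)/3) * x^4 + ((10 : ℝ)/9) * x^6 + ((-41 : ℝ)/315) * x^8 + ((5197 : ℝ)/604800) * x^10 + ((-59 : ℝ)/172800) * x^12 + ((251 : ℝ)/33868800) * x^14 + ((-13 : ℝ)/203212800) * x^16 + ((-1 : ℝ)/1625702400) * x^18 < 0)
    (hGhi : 19/20 < x → x ≤ 29/25 → (3 : ℝ) * x^2 + ((-13 : ℝ)/3) * x^4 + ((77 : ℝ)/72) * x^6 + ((-1 : ℝ)/16) * x^8 + ((-1 : ℝ)/576) * x^10 < 0) :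
    False := by
  rcases le_or_gt x (19/20 : ℝ) with hcase | hcase
  · have hx1 : x ≤ 1 := by linarith
    have hx2 : x^2 ≤ 1 := by nlinarith [hx1, hx0]
    have hx4 : x^4 ≤ 1 := by nlinarith [hx2, sq_nonneg x]
    have hx6 : x^6 ≤ 1 := by nlinarith [hx2, hx4, pow_pos hx0 2, pow_pos hx0 4]
    have hx8 : x^8 ≤ 1 := by nlinarith [hx4, sq_nonneg (x^2), pow_pos hx0 4]
    have hS7pos : 0 < x - x^3/6 + x^5/120 - x^7/5040 := by
      nlinarith [mul_le_mul_of_nonneg_left hx2 (le_of_lt hx0),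
        mul_le_mul_of_nonneg_left hx6 (le_of_lt hx0), pow_pos hx0 5, hx0]
    have t1 : x * c * (x - x^3/6 + x^5/120 - x^7/5040) ≤ x * c * s :=
      mul_le_mul_of_nonneg_left hsin7 (le_of_lt (mul_pos hx0 hc_pos))
    have t2 : x * c * s ≤ x * (1 - x^2/2 + x^4/24 - x^6/720 + x^8/40320) * s :=
      mul_le_mul_of_nonneg_right (mul_le_mul_of_nonneg_left hcos8 (le_of_lt hx0)) (le_of_lt hsp)
    have h2S7 : x * (1 - x^2/2 + x^4/24 - x^6/720 + x^8/40320)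
        ≤ 2 * (x - x^3/6 + x^5/120 - x^7/5040) := by
      nlinarith [mul_le_mul_of_nonneg_left hx4 (le_of_lt hx0),
        mul_le_mul_of_nonneg_left hx8 (le_of_lt hx0), pow_pos hx0 3, pow_pos hx0 7, hx0]
    have key2 : 0 ≤ (x*(1 - x^2/2 + x^4/24 - x^6/720 + x^8/40320)*s
          - x*c*(x - x^3/6 + x^5/120 - x^7/5040))
        * (3*s*(x - x^3/6 + x^5/120 - x^7/5040)
           - x*c*(x - x^3/6 + x^5/120 - x^7/5040)
           - x*(1 - x^2/2 + x^4/24 - x^6/720 + x^8/40320)*s) := by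
      apply mul_nonneg (by linarith)
      have u1 : x*c*(x - x^3/6 + x^5/120 - x^7/5040) < s*(x - x^3/6 + x^5/120 - x^7/5040) :=
        mul_lt_mul_of_pos_right hq1 hS7pos
      have u2 : x * (1 - x^2/2 + x^4/24 - x^6/720 + x^8/40320)*s
          ≤ 2 * (x - x^3/6 + x^5/120 - x^7/5040)*s :=
        mul_le_mul_of_nonneg_right h2S7 (le_of_lt hsp)
      nlinarith [u1, u2, mul_pos hsp hS7pos]
    have h1 : ((3 : ℝ) * x^2 + ((-13 : ℝ)/3) * x^4 + ((10 : ℝ)/9) * x^6 + ((-41 : ℝ)/315) * x^8 + ((5197 : ℝ)/604800) * x^10 + ((-59 : ℝ)/172800) * x^12 + ((251 : ℝ)/33868800) * x^14 + ((-13 : ℝ)/203212800) * x^16 + ((-1 : ℝ)/1625702400) * x^18) * s^2 < 0 :=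
      mul_neg_of_neg_of_pos (hGhi2 hcase) (pow_pos hsp 2)
    have hid : ((3 : ℝ) * x^2 + ((-13 : ℝ)/3) * x^4 + ((10 : ℝ)/9) * x^6 + ((-41 : ℝ)/315) * x^8 + ((5197 : ℝ)/604800) * x^10 + ((-59 : ℝ)/172800) * x^12 + ((251 : ℝ)/33868800) * x^14 + ((-13 : ℝ)/203212800) * x^16 + ((-1 : ℝ)/1625702400) * x^18) * s^2
        = (s^2 + 3*x*c*s - x^2*c^2 - 3*x^2*s^2) * (x - x^3/6 + x^5/120 - x^7/5040)^2
          + (x*(1 - x^2/2 + x^4/24 - x^6/720 + x^8/40320)*s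
             - x*c*(x - x^3/6 + x^5/120 - x^7/5040))
            * (3*s*(x - x^3/6 + x^5/120 - x^7/5040)
               - x*c*(x - x^3/6 + x^5/120 - x^7/5040)
               - x*(1 - x^2/2 + x^4/24 - x^6/720 + x^8/40320)*s) := by ring
    rw [hid, hF] at h1
    linarith [key2, h1]
  · rcases le_or_gt x (29/25 : ℝ) with hcase2 | hcase2
    · have hx2 : x^2 ≤ (29/25 : ℝ)^2 := by nlinarith [hcase2, hx0]
      have hS3pos : 0 < x - x^3/6 := by
        nlinarith [mul_le_mul_of_nonneg_left hx2 (le_of_lt hx0), hx0]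
      have t1 : x * c * (x - x^3/6) ≤ x * c * s :=
        mul_le_mul_of_nonneg_left hsin3 (le_of_lt (mul_pos hx0 hc_pos))
      have t2 : x * c * s ≤ x * (1 - x^2/2 + x^4/24) * s :=
        mul_le_mul_of_nonneg_right (mul_le_mul_of_nonneg_left hcos4 (le_of_lt hx0)) (le_of_lt hsp)
      have hx4 : x^4 ≤ (29/25 : ℝ)^4 := by nlinarith [hx2, sq_nonneg x, sq_nonneg (x^2)]
      have h2S3 : x * (1 - x^2/2 + x^4/24) ≤ 2 * (x - x^3/6) := by
        nlinarith [mul_le_mul_of_nonneg_left hx4 (le_of_lt hx0), pow_pos hx0 3, hx0,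
          mul_le_mul_of_nonneg_left hx2 (le_of_lt hx0)]
      have key2 : 0 ≤ (x*(1 - x^2/2 + x^4/24)*s - x*c*(x - x^3/6))
          * (3*s*(x - x^3/6) - x*c*(x - x^3/6) - x*(1 - x^2/2 + x^4/24)*s) := by
        apply mul_nonneg (by linarith)
        have u1 : x*c*(x - x^3/6) < s*(x - x^3/6) := mul_lt_mul_of_pos_right hq1 hS3pos
        have u2 : x * (1 - x^2/2 + x^4/24)*s ≤ 2 * (x - x^3/6)*s :=
          mul_le_mul_of_nonneg_right h2S3 (le_of_lt hsp)
        nlinarith [u1, u2, mul_pos hsp hS3pos]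
      have h1 : ((3 : ℝ) * x^2 + ((-13 : ℝ)/3) * x^4 + ((77 : ℝ)/72) * x^6 + ((-1 : ℝ)/16) * x^8 + ((-1 : ℝ)/576) * x^10) * s^2 < 0 :=
        mul_neg_of_neg_of_pos (hGhi hcase hcase2) (pow_pos hsp 2)
      have hid : ((3 : ℝ) * x^2 + ((-13 : ℝ)/3) * x^4 + ((77 : ℝ)/72) * x^6 + ((-1 : ℝ)/16) * x^8 + ((-1 : ℝ)/576) * x^10) * s^2
          = (s^2 + 3*x*c*s - x^2*c^2 - 3*x^2*s^2) * (x - x^3/6)^2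
            + (x*(1 - x^2/2 + x^4/24)*s - x*c*(x - x^3/6))
              * (3*s*(x - x^3/6) - x*c*(x - x^3/6) - x*(1 - x^2/2 + x^4/24)*s) := by
        ring
      rw [hid, hF] at h1
      linarith [key2, h1]
    · have u1 : x*c*s < s*s := mul_lt_mul_of_pos_right hq1 hsp
      have hx2 : (29/25 : ℝ)^2 < x^2 := by nlinarith [hcase2, hx0]
      nlinarith [hF, u1, mul_lt_mul_of_pos_right hx2 (pow_pos hsp 2), sq_nonneg (x*c)]


lemma taumax (p : ℝ) (h0 : 0 < p) (h1 : p < 861/1000) : p^2*(1+p^2) < 1300/1000 := by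
  have hp2 : p^2 < (861/1000 : ℝ)^2 := by nlinarith
  nlinarith [hp2, sq_nonneg p]



set_option maxHeartbeats 1000000 in
/-- `τ_p < τ_s`: for `μ_s ∈ (0, π)` solving `1 = 2μ² - 3μcot(μ) + μ²csc²(μ)` and
`μ_p ∈ (0, π/2)` the smallest positive solution of `cot μ = μ`, one has
`μ_p/sin(μ_p) < √(2μ_s³cot(μ_s) + μ_s² - μ_s⁴)`. -/
theorem stmt17 (μs μp : ℝ)
    (hμs : μs ∈ Set.Ioo 0 Real.pi)
    (hseq : 1 = 2 * μs ^ 2 - 3 * μs * Real.cot μs + μs ^ 2 * ((Real.sin μs)⁻¹) ^ 2)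
    (hμp : μp ∈ Set.Ioo 0 (Real.pi / 2))
    (hpeq : Real.cot μp = μp)
    (hpmin : ∀ μ ∈ Set.Ioo 0 μp, Real.cot μ ≠ μ) :
    μp / Real.sin μp < Real.sqrt (2 * μs ^ 3 * Real.cot μs + μs ^ 2 - μs ^ 4) := by
  obtain ⟨hs0, hsπ⟩ := hμs
  obtain ⟨hp0, hpπ2⟩ := hμp
  have hπ := Real.pi_gt_three
  have hπ2 := Real.pi_le_four
  have hsp : 0 < Real.sin μs := Real.sin_pos_of_pos_of_lt_pi hs0 hsπ
  have hpp : 0 < Real.sin μp := Real.sin_pos_of_pos_of_lt_pi hp0 (by linarith)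
  have hcp : 0 < Real.cos μp := Real.cos_pos_of_mem_Ioo ⟨by linarith, hpπ2⟩
  rw [Real.cot_eq_cos_div_sin] at hseq hpeq
  set s := Real.sin μs with hs_def
  set c := Real.cos μs with hc_def
  have pyth : c ^ 2 + s ^ 2 = 1 := Real.cos_sq_add_sin_sq μs
  have hsne : s ≠ 0 := ne_of_gt hsp
  -- cos μp = μp * sin μp
  have hpcs : Real.cos μp = μp * Real.sin μp := by
    field_simp at hpeq
    linarith [hpeq]
  have pythp : Real.cos μp ^ 2 + Real.sin μp ^ 2 = 1 := Real.cos_sq_add_sin_sq μp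
  -- Step A : μp < 0.861
  have hμp_lt : μp < (861/1000 : ℝ) := by
    by_contra hge
    push_neg at hge
    have h1 : Real.cos μp ≤ Real.cos (861/1000) :=
      Real.cos_le_cos_of_nonneg_of_le_pi (by norm_num) (by linarith) hge
    have h2 : Real.sin (861/1000 : ℝ) ≤ Real.sin μp :=
      Real.sin_le_sin_of_le_of_le_pi_div_two (by norm_num; linarith) (le_of_lt hpπ2) hge
    have h3 := cos_le8 (show (0:ℝ) ≤ 861/1000 by norm_num)
    have h4 := sin_ge7 (show (0:ℝ) ≤ 861/1000 by norm_num)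
    norm_num at h3 h4
    have h5 : (861/1000 : ℝ) * Real.sin (861/1000) ≤ μp * Real.sin μp := by
      apply mul_le_mul hge h2 (by linarith) (by linarith)
    nlinarith [h1, h3, h4, h5, hpcs, hge]
  -- Step B : (μp / sin μp)^2 = μp^2 * (1 + μp^2)
  have hτp : (μp / Real.sin μp)^2 = μp^2 * (1 + μp^2) := by
    field_simp
    linear_combination (-1 : ℝ) * pythp + (Real.cos μp + μp*Real.sin μp)*hpcs
  -- Step C : key equation
  have e1 : c/s*s^2 = c*s := by field_simp
  have e2 : (s⁻¹)^2*s^2 = 1 := by field_simp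
  have key : s^2 = 2*μs^2*s^2 - 3*μs*c*s + μs^2 := by
    linear_combination s^2 * hseq - 3*μs*e1 + μs^2*e2
  have hF : s^2 + 3*μs*c*s - μs^2*c^2 - 3*μs^2*s^2 = 0 := by
    linear_combination key - μs^2 * pyth
  -- Step D : μs < π/2
  have hs_lt : μs < Real.pi/2 := by
    by_contra hge
    push_neg at hge
    have hc_np : c ≤ 0 := Real.cos_nonpos_of_pi_div_two_le_of_le hge (by linarith)
    have hmu : (3/2 : ℝ) < μs := by linarith
    nlinarith [key, mul_nonneg (mul_nonneg (le_of_lt hs0) (neg_nonneg.2 hc_np)) (le_of_lt hsp),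
      sq_nonneg (μs*s), pyth, sq_nonneg c, hmu, hsp]
  have hc_pos : 0 < c := Real.cos_pos_of_mem_Ioo ⟨by linarith, hs_lt⟩
  -- q < 1 : μs * c < s
  have hq1 : μs * c < s := by
    have htan := Real.lt_tan hs0 hs_lt
    rw [Real.tan_eq_sin_div_cos] at htan
    have h := mul_lt_mul_of_pos_right htan hc_pos
    rwa [div_mul_cancel₀] at h
    exact ne_of_gt hc_pos
  -- Step E1 : μs > 0.9295
  have hs_gt : (1859/2000 : ℝ) < μs := by
    by_contra hle
    push_neg at hle
    exact musLB μs c s hs0 hle hsp hc_pos hq1 hF (Real.sin_lt hs0)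
      Real.one_sub_sq_div_two_le_cos (sin_le5 (le_of_lt hs0)) (cos_ge6 (le_of_lt hs0))
      (fun h89 => regionGlo μs (le_of_lt h89) hle)
  -- Step E2 : μs < 0.932
  have hs_ub : μs < (233/250 : ℝ) := by
    by_contra hge
    push_neg at hge
    exact musUB μs c s hs0 hge hsp hc_pos hq1 hF (sin_ge3 (le_of_lt hs0))
      (cos_le4 (le_of_lt hs0)) (sin_ge7 (le_of_lt hs0)) (cos_le8 (le_of_lt hs0))
      (fun h => regionGhi2 μs hge h) (fun h1 h2 => regionGhi μs (le_of_lt h1) h2)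
  -- Step F : conclusion
  have hcos_s_ge : Real.cos (233/250 : ℝ) ≤ c :=
    Real.cos_le_cos_of_nonneg_of_le_pi (le_of_lt hs0) (by linarith) (le_of_lt hs_ub)
  have hsin_s_le : s ≤ Real.sin (233/250 : ℝ) :=
    Real.sin_le_sin_of_le_of_le_pi_div_two (by linarith) (by norm_num; linarith) (le_of_lt hs_ub)
  have hcos_b := cos_ge6 (show (0:ℝ) ≤ 233/250 by norm_num)
  have hsin_b := sin_le5 (show (0:ℝ) ≤ 233/250 by norm_num)
  norm_num at hcos_b hsin_b
  have hdiv : (7425/10000 : ℝ) ≤ c / s := by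
    rw [le_div_iff₀ hsp]
    nlinarith [hcos_s_ge, hsin_s_le, hcos_b, hsin_b, hsp,
      Real.sin_pos_of_pos_of_lt_pi (show (0:ℝ) < 233/250 by norm_num) (by linarith)]
  have hA : (1300/1000 : ℝ) < 2 * μs ^ 3 * (c/s) + μs ^ 2 - μs ^ 4 := by
    have hcub : (1859/2000 : ℝ)^3 ≤ μs^3 := by nlinarith [hs_gt, hs0]
    have hterm1 : 2 * (1859/2000 : ℝ)^3 * (7425/10000 : ℝ) ≤ 2 * μs^3 * (c/s) := by
      apply mul_le_mul (by nlinarith [hcub]) hdiv (by norm_num)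
      positivity
    have hterm2 : (1859/2000 : ℝ)^2 * (1 - (233/250 : ℝ)^2) ≤ μs^2 - μs^4 := by
      nlinarith [hs_gt, hs_ub, hs0]
    nlinarith [hterm1, hterm2]
  rw [Real.cot_eq_cos_div_sin]
  have hτpos : 0 ≤ μp / Real.sin μp := le_of_lt (div_pos hp0 hpp)
  rw [Real.lt_sqrt hτpos]
  have hlb : (μp / Real.sin μp)^2 < 1300/1000 := by
    rw [hτp]
    exact taumax μp hp0 hμp_lt
  exact lt_of_lt_of_le hlb (le_of_lt hA)
end

section
/- Let μ ∈ (0, π/2) with μ > μ_p, where μ_p is the smallest positive solution of cot μ = μ, and let f(μ) = μ√(2μ cot μ + 1 − μ²). Then the function v⁺(x) = cos(μx) − ((f(μ)cos μ + μ²)/(μ + f(μ)sin μ)) sin(μx) has a zero in the open interval (0,1); consequently v⁺ changes sign on [0,1]. -/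
/-- For `μ ∈ (0, π/2)` with `μ > μ_p` (the smallest positive solution of `cot μ = μ`),
the function `v⁺(x) = cos(μx) - ((f(μ)cos μ + μ²)/(μ + f(μ)sin μ))sin(μx)`, where
`f(μ) = μ√(2μcot(μ) + 1 - μ²)`, has a zero in `(0, 1)`; consequently `v⁺` changes
sign on `[0, 1]`. -/
theorem stmt19 (μp μ : ℝ)
    (hμp : μp ∈ Set.Ioo 0 (Real.pi / 2))
    (hpeq : Real.cot μp = μp)
    (hpmin : ∀ ν ∈ Set.Ioo 0 μp, Real.cot ν ≠ ν)
    (hμ : μ ∈ Set.Ioo 0 (Real.pi / 2)) (hgt : μp < μ)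
    (f : ℝ → ℝ)
    (hf : ∀ ν, f ν = ν * Real.sqrt (2 * ν * Real.cot ν + 1 - ν ^ 2))
    (v : ℝ → ℝ)
    (hv : ∀ x, v x = Real.cos (μ * x) -
      (f μ * Real.cos μ + μ ^ 2) / (μ + f μ * Real.sin μ) * Real.sin (μ * x)) :
    (∃ x ∈ Set.Ioo (0 : ℝ) 1, v x = 0) ∧
    (∃ x ∈ Set.Icc (0 : ℝ) 1, 0 < v x) ∧
    (∃ x ∈ Set.Icc (0 : ℝ) 1, v x < 0) := by
  obtain ⟨hμp0, hμp2⟩ := hμp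
  obtain ⟨hμ0, hμ2⟩ := hμ
  have hpi := Real.pi_pos
  -- basic trig positivity
  have hsinp : 0 < Real.sin μp := Real.sin_pos_of_pos_of_lt_pi hμp0 (by linarith)
  have hsin : 0 < Real.sin μ := Real.sin_pos_of_pos_of_lt_pi hμ0 (by linarith)
  have hcosp : 0 < Real.cos μp := Real.cos_pos_of_mem_Ioo ⟨by linarith, hμp2⟩
  have hcos : 0 < Real.cos μ := Real.cos_pos_of_mem_Ioo ⟨by linarith, hμ2⟩
  -- cos μp = μp * sin μp
  have hpeq' : Real.cos μp = μp * Real.sin μp := by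
    rw [Real.cot_eq_cos_div_sin] at hpeq
    field_simp at hpeq
    linarith
  -- tan μp < tan μ
  have htan : Real.tan μp < Real.tan μ :=
    Real.tan_lt_tan_of_nonneg_of_lt_pi_div_two (le_of_lt hμp0) hμ2 hgt
  rw [Real.tan_eq_sin_div_cos, Real.tan_eq_sin_div_cos, div_lt_div_iff₀ hcosp hcos] at htan
  -- key inequality: cos μ < μ * sin μ
  have hkey : Real.cos μ < μ * Real.sin μ := by
    have h1 : Real.sin μp * Real.cos μ < Real.sin μp * (μp * Real.sin μ) := by nlinarith
    have h2 : Real.cos μ < μp * Real.sin μ := lt_of_mul_lt_mul_left h1 hsinp.le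
    nlinarith [mul_lt_mul_of_pos_right hgt hsin]
  -- denominator positive
  have hfnn : 0 ≤ f μ := by
    rw [hf]; exact mul_nonneg (le_of_lt hμ0) (Real.sqrt_nonneg _)
  have hD : 0 < μ + f μ * Real.sin μ := by positivity
  -- v 0 = 1
  have hv0 : v 0 = 1 := by simp [hv 0]
  -- v 1 < 0
  have hv1 : v 1 < 0 := by
    rw [hv 1, mul_one, sub_neg, div_mul_eq_mul_div, lt_div_iff₀ hD]
    nlinarith
  -- continuity
  have hveq : v = fun x => Real.cos (μ * x) -
      (f μ * Real.cos μ + μ ^ 2) / (μ + f μ * Real.sin μ) * Real.sin (μ * x) :=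
    funext hv
  have hcont : ContinuousOn v (Set.Icc (0 : ℝ) 1) := by
    rw [hveq]; fun_prop
  have h0m : (0 : ℝ) ∈ Set.Ioo (v 1) (v 0) := ⟨hv1, by rw [hv0]; norm_num⟩
  have := intermediate_value_Ioo' (by norm_num : (0:ℝ) ≤ 1) hcont h0m
  obtain ⟨x, hx, hxv⟩ := this
  refine ⟨⟨x, hx, hxv⟩, ⟨0, by norm_num, by rw [hv0]; norm_num⟩,
    ⟨1, by norm_num, hv1⟩⟩
end
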